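/- arXiv:1805.11287 — 4 statements merged into one kernel-verified Lean document; each statement's English description precedes it below -/
import Mathlib

section
/- Let P be an n-polytope in ℝⁿ, let (F₀,…,F_{n−1}) be a complete flag of P, and set F_n := P. Then for every subset I ⊂ {0,…,n}, the convex hull of the union ⋃_{i∈I} relint F_i equals the disjoint union ⨄_{i∈I} relint F_i; in particular the sets relint F_i for i ∈ I are pairwise disjoint and their union is convex. -/
open Set MeasureTheory Filter
open scoped Topology RealInnerProductSpace symmDiff

noncomputable section

abbrev Euc (d : ℕ) : Type := EuclideanSpace ℝ (Fin d)

variable {d : ℕ}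

/-- `P` is a polytope: the convex hull of finitely many points, with nonempty interior. -/
def IsPolytope (P : Set (Euc d)) : Prop :=
  ∃ V : Set (Euc d), V.Finite ∧ P = convexHull ℝ V ∧ (interior P).Nonempty

/-- `F` is a face of `P`: the intersection of `P` with a supporting hyperplane. -/
def IsFace (P F : Set (Euc d)) : Prop :=
  ∃ (f : Euc d →L[ℝ] ℝ) (c : ℝ), f ≠ 0 ∧ (∀ x ∈ P, f x ≤ c) ∧ (∃ x ∈ P, f x = c) ∧
    F = {x ∈ P | f x = c}

/-- `F` is an `i`-face of `P`: a face spanning an `i`-dimensional affine subspace. -/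
def IsFaceOfDim (P : Set (Euc d)) (i : ℕ) (F : Set (Euc d)) : Prop :=
  IsFace P F ∧ Module.finrank ℝ (vectorSpan ℝ F) = i

/-- A complete flag of `P`: an increasing sequence `F 0 ⊆ … ⊆ F (n-1)` with `F i` an `i`-face. -/
def IsCompleteFlag (n : ℕ) (P : Set (Euc d)) (F : Fin n → Set (Euc d)) : Prop :=
  (∀ i : Fin n, IsFaceOfDim P (i : ℕ) (F i)) ∧ ∀ i j : Fin n, i ≤ j → F i ⊆ F j

/-- `v` is a vertex of `P`, i.e. `{v}` is a (0-dimensional) face of `P`. -/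
def IsVertex (P : Set (Euc d)) (v : Euc d) : Prop := IsFace P {v}

/-- The set of complete flags of `P`. -/
def flags (n : ℕ) (P : Set (Euc d)) : Set (Fin n → Set (Euc d)) :=
  {F | IsCompleteFlag n P F}

/-- The set of complete flags of `P` whose `0`-face is the vertex `{v}`. -/
def flagsAt (n : ℕ) (P : Set (Euc d)) (v : Euc d) : Set (Fin n → Set (Euc d)) :=
  {F | IsCompleteFlag n P F ∧ ∀ i : Fin n, v ∈ F i}

/-- `S` is an `n`-simplex: the convex hull of `n+1` affinely independent points. -/
def IsSimplex (n : ℕ) (S : Set (Euc d)) : Prop :=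
  ∃ v : Fin (n + 1) → Euc d, AffineIndependent ℝ v ∧ S = convexHull ℝ (Set.range v)

/-- `S` is a flag simplex of `P` associated with the complete flag `F`: an `n`-simplex whose
vertices can be labelled so that `v i ∈ relint (F i)` for `i < n` and `v n ∈ int P`. -/
def IsFlagSimplexAssoc (n : ℕ) (P : Set (Euc d)) (F : Fin n → Set (Euc d))
    (S : Set (Euc d)) : Prop :=
  ∃ v : Fin (n + 1) → Euc d, AffineIndependent ℝ v ∧ S = convexHull ℝ (Set.range v) ∧
    (∀ i : Fin n, v i.castSucc ∈ intrinsicInterior ℝ (F i)) ∧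
    v (Fin.last n) ∈ interior P

/-- `S` is a flag simplex of `P`. -/
def IsFlagSimplex (n : ℕ) (P S : Set (Euc d)) : Prop :=
  ∃ F : Fin n → Set (Euc d), IsCompleteFlag n P F ∧ IsFlagSimplexAssoc n P F S

/-- The weighted floating body `P_δ^φ`: the intersection of all closed half-spaces `H⁻`
whose complementary half-space `H⁺` cuts off weighted volume at most `δ` from `P`. -/
def weightedFloatingBody (P : Set (Euc d)) (φ : Euc d → ℝ) (δ : ℝ) : Set (Euc d) :=
  ⋂₀ {H | ∃ (f : Euc d →L[ℝ] ℝ) (c : ℝ), f ≠ 0 ∧ H = {x | f x ≤ c} ∧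
      (∫ x in P ∩ {x | c ≤ f x}, φ x) ≤ δ}

/-- The convex floating body `P_δ`. -/
def floatingBody (P : Set (Euc d)) (δ : ℝ) : Set (Euc d) :=
  ⋂₀ {H | ∃ (f : Euc d →L[ℝ] ℝ) (c : ℝ), f ≠ 0 ∧ H = {x | f x ≤ c} ∧
      (volume (P ∩ {x | c ≤ f x})).toReal ≤ δ}

/-- `A⁺(T, z i, δ)`: the union of all sets `T ∩ int H⁺` over closed half-spaces `H⁺` with
`λ_n(T ∩ H⁺) ≤ δ`, `z i ∈ int H⁺` and `z j ∉ H⁺` for `j ≠ i`. -/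
def Aplus (n : ℕ) (T : Set (Euc d)) (z : Fin (n + 1) → Euc d) (i : Fin (n + 1))
    (δ : ℝ) : Set (Euc d) :=
  ⋃₀ {A | ∃ (f : Euc d →L[ℝ] ℝ) (c : ℝ), f ≠ 0 ∧
      A = T ∩ interior {x | c ≤ f x} ∧
      (volume (T ∩ {x | c ≤ f x})).toReal ≤ δ ∧
      z i ∈ interior {x | c ≤ f x} ∧
      ∀ j : Fin (n + 1), j ≠ i → z j ∉ {x | c ≤ f x}}
/-- Metric characterization of the intrinsic interior. -/
lemma mem_relint_iff {s : Set (Euc d)} {x : Euc d} :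
    x ∈ intrinsicInterior ℝ s ↔ x ∈ affineSpan ℝ s ∧
      ∃ ε > 0, ∀ w, w ∈ affineSpan ℝ s → dist w x < ε → w ∈ s := by
  rw [mem_intrinsicInterior]
  constructor
  · rintro ⟨y, hy, rfl⟩
    refine ⟨y.2, ?_⟩
    rw [mem_interior_iff_mem_nhds, Metric.mem_nhds_iff] at hy
    obtain ⟨ε, hε, hball⟩ := hy
    refine ⟨ε, hε, fun w hw hd => ?_⟩
    exact hball (show (⟨w, hw⟩ : affineSpan ℝ s) ∈ Metric.ball y ε by
      simpa [Metric.mem_ball, Subtype.dist_eq] using hd)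
  · rintro ⟨hx, ε, hε, H⟩
    refine ⟨⟨x, hx⟩, ?_, rfl⟩
    rw [mem_interior_iff_mem_nhds, Metric.mem_nhds_iff]
    exact ⟨ε, hε, fun y hy => H y y.2 (by simpa [Metric.mem_ball, Subtype.dist_eq] using hy)⟩

/-- Open segment from a point of a convex set to a point of its relative interior stays in
the relative interior. -/
lemma openSegment_subset_relint {s : Set (Euc d)} (hs : Convex ℝ s) {x y : Euc d}
    (hx : x ∈ s) (hy : y ∈ intrinsicInterior ℝ s) :
    openSegment ℝ x y ⊆ intrinsicInterior ℝ s := by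
  rintro z ⟨a, b, ha, hb, hab, rfl⟩
  obtain ⟨hyspan, ε, hε, H⟩ := mem_relint_iff.1 hy
  have hxspan : x ∈ affineSpan ℝ s := subset_affineSpan ℝ s hx
  have hb' : b ≠ 0 := hb.ne'
  have hzspan : a • x + b • y ∈ affineSpan ℝ s := by
    have := AffineSubspace.smul_vsub_vadd_mem (affineSpan ℝ s) b hyspan hxspan hxspan
    simp only [vsub_eq_sub, vadd_eq_add] at this
    have heq : b • (y - x) + x = a • x + b • y := by
      have ha1 : a = 1 - b := by linarith
      rw [ha1]; module
    rwa [heq] at this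
  rw [mem_relint_iff]
  refine ⟨hzspan, b * ε, by positivity, fun w hwspan hwd => ?_⟩
  set z := a • x + b • y with hz
  set w' := b⁻¹ • (w - z) + y with hw'
  have hw'span : w' ∈ affineSpan ℝ s := by
    have := AffineSubspace.smul_vsub_vadd_mem (affineSpan ℝ s) b⁻¹ hwspan hzspan hyspan
    simpa only [vsub_eq_sub, vadd_eq_add] using this
  have hw'dist : dist w' y < ε := by
    have hwy : w' - y = b⁻¹ • (w - z) := by rw [hw']; abel
    rw [dist_eq_norm, hwy, norm_smul, Real.norm_eq_abs, abs_of_pos (inv_pos.2 hb)]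
    have hwz : ‖w - z‖ < b * ε := by rwa [dist_eq_norm] at hwd
    calc b⁻¹ * ‖w - z‖ < b⁻¹ * (b * ε) := by
          exact (mul_lt_mul_iff_right₀ (inv_pos.2 hb)).2 hwz
      _ = ε := by field_simp
  have hw's : w' ∈ s := H w' hw'span hw'dist
  have hcomb : a • x + b • w' ∈ s := hs hx hw's ha.le hb.le hab
  have : a • x + b • w' = w := by
    rw [hw', hz, smul_add, smul_smul, mul_inv_cancel₀ hb', one_smul]
    abel
  rwa [this] at hcomb

/-- **Lemma (flag dissection).** Let `(F₀,…,F_{n-1})` be a complete flag of an `n`-polytope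
`P`, extended by `F_n := P` to a family `G : Fin (n+1) → Set`. For every `I ⊆ {0,…,n}`,
the convex hull of `⋃_{i ∈ I} relint (G i)` equals `⋃_{i ∈ I} relint (G i)`, and the sets
`relint (G i)`, `i ∈ I`, are pairwise disjoint. -/
theorem flag_dissection (n : ℕ) (P : Set (Euc n)) (hP : IsPolytope P)
    (F : Fin n → Set (Euc n)) (hF : IsCompleteFlag n P F)
    (G : Fin (n + 1) → Set (Euc n))
    (hG : ∀ i : Fin n, G i.castSucc = F i) (hGlast : G (Fin.last n) = P)
    (I : Set (Fin (n + 1))) :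
    convexHull ℝ (⋃ i ∈ I, intrinsicInterior ℝ (G i)) =
        ⋃ i ∈ I, intrinsicInterior ℝ (G i) ∧
    ∀ i ∈ I, ∀ j ∈ I, i ≠ j →
      Disjoint (intrinsicInterior ℝ (G i)) (intrinsicInterior ℝ (G j)) := by
  obtain ⟨V, hVfin, hPV, hPint⟩ := hP
  have hPconv : Convex ℝ P := hPV ▸ convex_convexHull ℝ V
  have hGsub : ∀ i : Fin (n + 1), G i ⊆ P := by
    intro i
    refine Fin.lastCases ?_ ?_ i
    · rw [hGlast]
    · intro i
      rw [hG i]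
      obtain ⟨⟨f, c, hf0, hfle, hex, hFi⟩, _⟩ := hF.1 i
      rw [hFi]; exact fun x hx => hx.1
  have hGconv : ∀ i : Fin (n + 1), Convex ℝ (G i) := by
    intro i
    refine Fin.lastCases ?_ ?_ i
    · rw [hGlast]; exact hPconv
    · intro i
      rw [hG i]
      obtain ⟨⟨f, c, hf0, hfle, hex, hFi⟩, _⟩ := hF.1 i
      rw [hFi]
      show Convex ℝ (P ∩ {x | f x = c})
      exact hPconv.inter (convex_hyperplane ⟨f.map_add, f.map_smul⟩ c)
  have hGmono : ∀ i j : Fin (n + 1), i ≤ j → G i ⊆ G j := by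
    intro i j hij
    rcases eq_or_ne j (Fin.last n) with rfl | hj
    · rw [hGlast]; exact hGsub i
    · obtain ⟨j', rfl⟩ := Fin.exists_castSucc_eq.mpr hj
      have hi : i ≠ Fin.last n := by
        intro h; subst h
        exact absurd hij (not_le.2 (Fin.castSucc_lt_last j'))
      obtain ⟨i', rfl⟩ := Fin.exists_castSucc_eq.mpr hi
      rw [hG i', hG j']
      exact hF.2 i' j' (by simpa using hij)
  have hdisj : ∀ i j : Fin (n + 1), i < j →
      Disjoint (intrinsicInterior ℝ (G i)) (intrinsicInterior ℝ (G j)) := by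
    intro i j hij
    have hi : i ≠ Fin.last n := (hij.trans_le (Fin.le_last j)).ne
    obtain ⟨i', rfl⟩ := Fin.exists_castSucc_eq.mpr hi
    obtain ⟨⟨f, c, hf0, hfle, hex, hFi⟩, hdim⟩ := hF.1 i'
    have hGi : G i'.castSucc = {x ∈ P | f x = c} := by rw [hG i', hFi]
    have hy : ∃ y ∈ G j, f y < c := by
      by_contra hcon
      push_neg at hcon
      have hsub : G j ⊆ G i'.castSucc := by
        intro y hyGj
        rw [hGi]
        exact ⟨hGsub j hyGj, le_antisymm (hfle y (hGsub j hyGj)) (hcon y hyGj)⟩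
      rcases eq_or_ne j (Fin.last n) with rfl | hj
      · have hPc : ∀ x ∈ P, f x = c := by
          intro x hx
          have hx' : x ∈ G (Fin.last n) := by rw [hGlast]; exact hx
          have := hsub hx'
          rw [hGi] at this; exact this.2
        obtain ⟨x₀, hx₀⟩ := hPint
        obtain ⟨ε, hε, hball⟩ := Metric.isOpen_iff.1 isOpen_interior x₀ hx₀
        refine hf0 (ContinuousLinearMap.ext fun v => ?_)
        rcases eq_or_ne v 0 with rfl | hv
        · simp
        · have hvn : 0 < ‖v‖ := norm_pos_iff.2 hv
          have hδ : 0 < ε / (2 * ‖v‖) := by positivity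
          have hmem : x₀ + (ε / (2 * ‖v‖)) • v ∈ Metric.ball x₀ ε := by
            rw [Metric.mem_ball, dist_eq_norm]
            have : x₀ + (ε / (2 * ‖v‖)) • v - x₀ = (ε / (2 * ‖v‖)) • v := by abel
            rw [this, norm_smul, Real.norm_eq_abs, abs_of_pos hδ]
            rw [div_mul_eq_mul_div, div_lt_iff₀ (by positivity)]
            nlinarith
          have h1 : f (x₀ + (ε / (2 * ‖v‖)) • v) = c :=
            hPc _ (interior_subset (hball hmem))
          have h2 : f x₀ = c := hPc _ (interior_subset hx₀)
          have h3 : f (x₀ + (ε / (2 * ‖v‖)) • v) = f x₀ + (ε / (2 * ‖v‖)) * f v := by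
            simp [map_add, f.map_smul]
          rw [h1, h2] at h3
          have : (ε / (2 * ‖v‖)) * f v = 0 := by linarith
          have := (mul_eq_zero.1 this).resolve_left hδ.ne'
          simpa using this
      · obtain ⟨j', rfl⟩ := Fin.exists_castSucc_eq.mpr hj
        have hdj := (hF.1 j').2
        rw [← hG j'] at hdj
        rw [← hG i'] at hdim
        have hle : vectorSpan ℝ (G j'.castSucc) ≤ vectorSpan ℝ (G i'.castSucc) :=
          vectorSpan_mono ℝ hsub
        have hfr := Submodule.finrank_mono hle
        rw [hdj, hdim] at hfr
        have hlt : (i' : ℕ) < (j' : ℕ) := by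
          have := Fin.castSucc_lt_castSucc_iff.1 hij
          exact this
        omega
    obtain ⟨y, hyGj, hyf⟩ := hy
    rw [Set.disjoint_left]
    intro x hxi hxj
    have hxGi : x ∈ G i'.castSucc := intrinsicInterior_subset hxi
    have hxc : f x = c := by rw [hGi] at hxGi; exact hxGi.2
    obtain ⟨hxspan, ε, hε, H⟩ := mem_relint_iff.1 hxj
    have hyspan : y ∈ affineSpan ℝ (G j) := subset_affineSpan ℝ _ hyGj
    set t := ε / (2 * (‖x - y‖ + 1)) with ht
    have htpos : 0 < t := by positivity
    set w := t • (x - y) + x with hw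
    have hwspan : w ∈ affineSpan ℝ (G j) := by
      have := AffineSubspace.smul_vsub_vadd_mem (affineSpan ℝ (G j)) t hxspan hyspan hxspan
      simpa only [vsub_eq_sub, vadd_eq_add] using this
    have hwd : dist w x < ε := by
      rw [dist_eq_norm]
      have hwx : w - x = t • (x - y) := by rw [hw]; abel
      rw [hwx, norm_smul, Real.norm_eq_abs, abs_of_pos htpos, ht]
      rw [div_mul_eq_mul_div, div_lt_iff₀ (by positivity)]
      nlinarith [norm_nonneg (x - y)]
    have hwGj : w ∈ G j := H w hwspan hwd
    have hwle : f w ≤ c := hfle w (hGsub j hwGj)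
    have hfw : f w = c + t * (c - f y) := by
      simp only [hw, map_add, f.map_smul, map_sub, smul_eq_mul, hxc]
      ring
    nlinarith
  refine ⟨?_, fun i hi j hj hij => ?_⟩
  · refine Convex.convexHull_eq ?_
    intro p hp q hq a b ha hb hab
    simp only [Set.mem_iUnion] at hp hq ⊢
    obtain ⟨i, hiI, hpi⟩ := hp
    obtain ⟨j, hjI, hqj⟩ := hq
    rcases ha.eq_or_lt with rfl | ha'
    · have hb1 : b = 1 := by linarith
      subst hb1
      refine ⟨j, hjI, ?_⟩
      simp only [zero_smul, zero_add, one_smul]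
      exact hqj
    rcases hb.eq_or_lt with rfl | hb'
    · have ha1 : a = 1 := by linarith
      subst ha1
      refine ⟨i, hiI, ?_⟩
      simp only [zero_smul, add_zero, one_smul]
      exact hpi
    rcases le_total i j with hij | hij
    · have hpGj : p ∈ G j := hGmono i j hij (intrinsicInterior_subset hpi)
      have : a • p + b • q ∈ intrinsicInterior ℝ (G j) :=
        openSegment_subset_relint (hGconv j) hpGj hqj ⟨a, b, ha', hb', hab, rfl⟩
      exact ⟨j, hjI, this⟩
    · have hqGi : q ∈ G i := hGmono j i hij (intrinsicInterior_subset hqj)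
      have : a • p + b • q ∈ intrinsicInterior ℝ (G i) :=
        openSegment_subset_relint (hGconv i) hqGi hpi
          ⟨b, a, hb', ha', by linarith, by abel⟩
      exact ⟨i, hiI, this⟩
  · rcases hij.lt_or_gt with h | h
    · exact hdisj i j h
    · exact (hdisj j i h).symm
end
end

section
/- Let P be an n-polytope in ℝⁿ and let F be a complete flag of P. If S₁ and S₂ are two flag simplices of P associated with the same flag F, then there exists a flag simplex S of P associated with F such that S ⊂ S₁ ∩ S₂. -/
open Set MeasureTheory Filter
open scoped Topology RealInnerProductSpace symmDiff

noncomputable section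

variable {d : ℕ}

lemma aux_relint_segment {n : ℕ} {s : Set (Euc n)} (hs : Convex ℝ s) {x y : Euc n}
    (hx : x ∈ intrinsicInterior ℝ s) (hy : y ∈ s) {t : ℝ} (ht0 : 0 < t) (ht1 : t ≤ 1) :
    (1 - t) • y + t • x ∈ intrinsicInterior ℝ s := by
  obtain ⟨x', hx', hxx⟩ := mem_intrinsicInterior.mp hx
  have hxs : x ∈ s := hxx ▸ (interior_subset hx' : x' ∈ Subtype.val ⁻¹' s)
  have hxspan : x ∈ affineSpan ℝ s := hxx ▸ x'.2
  rw [mem_interior_iff_mem_nhds, mem_nhds_subtype] at hx'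
  obtain ⟨U, hU, hUs⟩ := hx'
  rw [hxx] at hU
  obtain ⟨ε, hε0, hball⟩ := Metric.mem_nhds_iff.mp hU
  have hkey : ∀ p : Euc n, p ∈ affineSpan ℝ s → dist p x < ε → p ∈ s := by
    intro p hp hd
    exact hUs (show (⟨p, hp⟩ : affineSpan ℝ s) ∈ Subtype.val ⁻¹' U from hball hd)
  set z := (1 - t) • y + t • x with hz
  have hzs : z ∈ s := hs hy hxs (by linarith) (le_of_lt ht0) (by ring)
  have hzspan : z ∈ affineSpan ℝ s := subset_affineSpan ℝ s hzs
  rw [mem_intrinsicInterior]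
  refine ⟨⟨z, hzspan⟩, ?_, rfl⟩
  rw [mem_interior_iff_mem_nhds, mem_nhds_subtype]
  refine ⟨Metric.ball z (t * ε), Metric.ball_mem_nhds z (by positivity), ?_⟩
  rintro ⟨p, hpspan⟩ hpball
  have hpd : dist p z < t * ε := hpball
  set q := x + t⁻¹ • (p - z) with hq
  have hqspan : q ∈ affineSpan ℝ s := by
    have := (affineSpan ℝ s).smul_vsub_vadd_mem t⁻¹ hpspan hzspan hxspan
    simpa [vsub_eq_sub, vadd_eq_add, add_comm] using this
  have hqd : dist q x < ε := by
    have hdq : dist q x = t⁻¹ * ‖p - z‖ := by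
      rw [dist_eq_norm]
      simp only [hq, add_sub_cancel_left, norm_smul, Real.norm_eq_abs,
        abs_of_pos (inv_pos.mpr ht0)]
    rw [hdq]
    have hpz : ‖p - z‖ < t * ε := by rwa [← dist_eq_norm]
    calc t⁻¹ * ‖p - z‖ < t⁻¹ * (t * ε) := mul_lt_mul_of_pos_left hpz (inv_pos.mpr ht0)
      _ = ε := by field_simp
  have hqs : q ∈ s := hkey q hqspan hqd
  have hpq : p = (1 - t) • y + t • q := by
    rw [hq, smul_add, smul_smul, mul_inv_cancel₀ (ne_of_gt ht0), one_smul, hz]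
    abel
  show p ∈ s
  rw [hpq]
  exact hs hy hqs (by linarith) (le_of_lt ht0) (by ring)

lemma aux_img_range {n m : ℕ} (hmn : m + 1 ≤ n + 1) (p : Fin (n + 1) → Euc n) :
    p '' {j : Fin (n + 1) | (j : ℕ) ≤ m} = Set.range (p ∘ Fin.castLE hmn) := by
  ext x
  constructor
  · rintro ⟨j, hj, rfl⟩
    simp only [Set.mem_setOf_eq] at hj
    refine ⟨⟨(j : ℕ), by omega⟩, ?_⟩
    simp only [Function.comp_apply]
    exact congrArg p (Fin.ext rfl)
  · rintro ⟨j', rfl⟩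
    refine ⟨Fin.castLE hmn j', ?_, rfl⟩
    simp only [Set.mem_setOf_eq, Fin.coe_castLE]
    exact Nat.lt_succ_iff.mp j'.isLt

/-- The affine span of the first `m+1` points of an affinely independent family contained in a
set `G` of intrinsic dimension `m` equals the affine span of `G`. -/

lemma aux_span_eq {n m : ℕ} (p : Fin (n + 1) → Euc n) (hp : AffineIndependent ℝ p)
    (G : Set (Euc n)) (hG : Module.finrank ℝ (vectorSpan ℝ G) = m) (hm : m ≤ n)
    (hmem : ∀ j : Fin (n + 1), (j : ℕ) ≤ m → p j ∈ G) :
    affineSpan ℝ (p '' {j : Fin (n + 1) | (j : ℕ) ≤ m}) = affineSpan ℝ G := by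
  have hmn : m + 1 ≤ n + 1 := by omega
  have hsub : AffineIndependent ℝ (p ∘ Fin.castLE hmn) :=
    hp.comp_embedding (Fin.castLEEmb hmn)
  have hle : affineSpan ℝ (p '' {j : Fin (n + 1) | (j : ℕ) ≤ m}) ≤ affineSpan ℝ G := by
    apply affineSpan_mono
    rintro x ⟨j, hj, rfl⟩
    exact hmem j hj
  have hfr : Module.finrank ℝ (vectorSpan ℝ (p '' {j : Fin (n + 1) | (j : ℕ) ≤ m})) = m := by
    rw [aux_img_range hmn]
    exact hsub.finrank_vectorSpan (by simp)
  have hdir : (affineSpan ℝ (p '' {j : Fin (n + 1) | (j : ℕ) ≤ m})).direction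
      = (affineSpan ℝ G).direction := by
    apply Submodule.eq_of_le_of_finrank_le (AffineSubspace.direction_le hle)
    rw [direction_affineSpan, direction_affineSpan, hfr, hG]
  refine AffineSubspace.eq_of_direction_eq_of_nonempty_of_le hdir ?_ hle
  exact ⟨p 0, subset_affineSpan ℝ _ ⟨0, by simp, rfl⟩⟩

/-- A supporting functional is strictly below its level on the interior. -/

lemma aux_interior_lt {n : ℕ} {P : Set (Euc n)} (f : Euc n →L[ℝ] ℝ) (hf : f ≠ 0) {c : ℝ}
    (hfc : ∀ x ∈ P, f x ≤ c) {x : Euc n} (hx : x ∈ interior P) : f x < c := by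
  obtain ⟨z, hz⟩ : ∃ z, f z ≠ 0 := by
    by_contra h
    push_neg at h
    exact hf (ContinuousLinearMap.ext fun z => by simp [h z])
  obtain ⟨z, hz0, hzpos⟩ : ∃ z : Euc n, z ≠ 0 ∧ 0 < f z := by
    rcases lt_or_gt_of_ne hz with h | h
    · exact ⟨-z, fun h0 => by simp [neg_eq_zero] at h0; simp [h0] at hz, by simpa using h⟩
    · exact ⟨z, fun h0 => by simp [h0] at hz, h⟩
  obtain ⟨ε, hε0, hball⟩ := Metric.mem_nhds_iff.mp (mem_interior_iff_mem_nhds.mp hx)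
  set y := x + (ε / (2 * ‖z‖)) • z with hy
  have hznorm : (0:ℝ) < ‖z‖ := norm_pos_iff.mpr hz0
  have hyball : y ∈ Metric.ball x ε := by
    rw [Metric.mem_ball, dist_eq_norm, hy, add_sub_cancel_left, norm_smul, Real.norm_eq_abs,
      abs_of_pos (by positivity)]
    rw [div_mul_eq_mul_div, mul_comm]
    rw [div_lt_iff₀ (by positivity)]
    nlinarith
  have hyP : y ∈ P := hball hyball
  have hfy : f y = f x + (ε / (2 * ‖z‖)) * f z := by simp [hy]
  have hlt : f x < f y := by
    rw [hfy]
    have : 0 < (ε / (2 * ‖z‖)) * f z := by positivity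
    linarith
  linarith [hfc y hyP]

/-- Coordinates with respect to an affine basis, of a point in the span of the first `i+1`
basis points; `g` is an affine functional vanishing on the first `i` basis points. -/

lemma aux_coord {n : ℕ} (i : ℕ) (hi : i ≤ n) (b : AffineBasis (Fin (n + 1)) ℝ (Euc n))
    (g : Euc n →ᵃ[ℝ] ℝ) {x : Euc n}
    (hx : x ∈ affineSpan ℝ (⇑b '' {j : Fin (n + 1) | (j : ℕ) ≤ i}))
    (hg : ∀ j : Fin (n + 1), (j : ℕ) < i → g (b j) = 0) :
    (∀ k : Fin (n + 1), i < (k : ℕ) → b.coord k x = 0) ∧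
      g x = b.coord ⟨i, by omega⟩ x * g (b ⟨i, by omega⟩) := by
  have hin : i + 1 ≤ n + 1 := by omega
  rw [aux_img_range hin] at hx
  obtain ⟨a, ha1, hxa⟩ := eq_affineCombination_of_mem_affineSpan_of_fintype hx
  have happ : ∀ h : Euc n →ᵃ[ℝ] ℝ, h x = ∑ j : Fin (i + 1), a j * h (b (Fin.castLE hin j)) := by
    intro h
    rw [hxa, Finset.map_affineCombination _ _ _ ha1 h,
      Finset.affineCombination_eq_linear_combination _ _ _ ha1]
    simp [Function.comp]
  constructor
  · intro k hk
    rw [happ (b.coord k)]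
    apply Finset.sum_eq_zero
    intro j _
    have hne : k ≠ Fin.castLE hin j := by
      intro h
      have h2 : (k : ℕ) = (j : ℕ) := by rw [h]; simp [Fin.coe_castLE]
      have := j.isLt
      omega
    rw [b.coord_apply_ne hne, mul_zero]
  · have hlast : Fin.castLE hin (Fin.last i) = ⟨i, by omega⟩ := by
      apply Fin.ext
      simp [Fin.coe_castLE, Fin.val_last]
    have hjlt : ∀ j : Fin (i + 1), j ≠ Fin.last i → (j : ℕ) < i := by
      intro j hj
      have hji : (j : ℕ) ≠ i := fun hh => hj (Fin.ext (by simp [Fin.val_last, hh]))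
      have := j.isLt
      omega
    have h1 : b.coord ⟨i, by omega⟩ x = a (Fin.last i) := by
      rw [happ (b.coord ⟨i, by omega⟩)]
      rw [Finset.sum_eq_single (Fin.last i)]
      · rw [hlast, b.coord_apply_eq, mul_one]
      · intro j _ hj
        have hjv := hjlt j hj
        have hne : (⟨i, by omega⟩ : Fin (n + 1)) ≠ Fin.castLE hin j := by
          intro h
          have := congrArg Fin.val h
          simp only [Fin.coe_castLE] at this
          omega
        rw [b.coord_apply_ne hne, mul_zero]
      · intro h; exact absurd (Finset.mem_univ _) h
    have h2 : g x = a (Fin.last i) * g (b ⟨i, by omega⟩) := by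
      rw [happ g]
      rw [Finset.sum_eq_single (Fin.last i)]
      · rw [hlast]
      · intro j _ hj
        rw [hg (Fin.castLE hin j) (by simpa [Fin.coe_castLE] using hjlt j hj), mul_zero]
      · intro h; exact absurd (Finset.mem_univ _) h
    rw [h2, h1]

noncomputable def auxG {n : ℕ} (f : Euc n →L[ℝ] ℝ) (c : ℝ) : Euc n →ᵃ[ℝ] ℝ where
  toFun x := c - f x
  linear := -(f : Euc n →ₗ[ℝ] ℝ)
  map_vadd' p z := by
    simp only [vadd_eq_add, map_add, LinearMap.neg_apply, ContinuousLinearMap.coe_coe]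
    ring

@[simp] lemma auxG_apply {n : ℕ} (f : Euc n →L[ℝ] ℝ) (c : ℝ) (x : Euc n) :
    auxG f c x = c - f x := rfl

lemma aux_face_strict {n m : ℕ} (p : Fin (n + 1) → Euc n) (hp : AffineIndependent ℝ p)
    {P G : Set (Euc n)} (f : Euc n →L[ℝ] ℝ) {c : ℝ}
    (hfle : ∀ x ∈ P, f x ≤ c) (hGeq : G = {x | x ∈ P ∧ f x = c})
    (hspan : affineSpan ℝ (p '' {j : Fin (n + 1) | (j : ℕ) ≤ m}) = affineSpan ℝ G)
    (hmlt : m + 1 < n + 1)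
    (hmemP : p ⟨m + 1, hmlt⟩ ∈ P) : f (p ⟨m + 1, hmlt⟩) < c := by
  rcases (hfle _ hmemP).lt_or_eq with h | h
  · exact h
  exfalso
  have hG : p ⟨m + 1, hmlt⟩ ∈ G := by rw [hGeq]; exact ⟨hmemP, h⟩
  have h1 : p ⟨m + 1, hmlt⟩ ∈ affineSpan ℝ (p '' {j : Fin (n + 1) | (j : ℕ) ≤ m}) := by
    rw [hspan]; exact subset_affineSpan ℝ _ hG
  have h2 : affineSpan ℝ (p '' {j : Fin (n + 1) | (j : ℕ) ≤ m})
      ≤ affineSpan ℝ (p '' (Set.univ \ {⟨m + 1, hmlt⟩})) := by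
    apply affineSpan_mono
    apply Set.image_mono
    intro j hj
    simp only [Set.mem_setOf_eq] at hj
    refine ⟨trivial, ?_⟩
    intro he
    have : (j : ℕ) = m + 1 := by rw [he]
    omega
  exact hp.notMem_affineSpan_diff ⟨m + 1, hmlt⟩ Set.univ (h2 h1)


set_option maxHeartbeats 1000000 in
/-- **Proposition (i).** If `S₁` and `S₂` are flag simplices of an `n`-polytope `P`
associated with the same complete flag `F`, then there exists a flag simplex `S` of `P`
associated with `F` such that `S ⊆ S₁ ∩ S₂`. -/
theorem flag_simplices_common_refinement (n : ℕ) (P : Set (Euc n)) (hP : IsPolytope P)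
    (F : Fin n → Set (Euc n)) (hF : IsCompleteFlag n P F)
    (S₁ S₂ : Set (Euc n))
    (h₁ : IsFlagSimplexAssoc n P F S₁) (h₂ : IsFlagSimplexAssoc n P F S₂) :
    ∃ S : Set (Euc n), IsFlagSimplexAssoc n P F S ∧ S ⊆ S₁ ∩ S₂ := by
  classical
  obtain ⟨v, hv, hS1, hv1, hv2⟩ := h₁
  obtain ⟨w, hw, hS2, hw1, hw2⟩ := h₂
  obtain ⟨Vset, hVfin, hPV, hPint⟩ := hP
  have hPconv : Convex ℝ P := hPV ▸ convex_convexHull ℝ Vset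
  have hFsub : ∀ i : Fin n, F i ⊆ P := by
    intro i
    obtain ⟨⟨f, c, -, -, -, hEq⟩, -⟩ := hF.1 i
    rw [hEq]; exact sep_subset _ _
  have hFconv : ∀ i : Fin n, Convex ℝ (F i) := by
    intro i
    obtain ⟨⟨f, c, -, -, -, hEq⟩, -⟩ := hF.1 i
    rw [hEq, show {x | x ∈ P ∧ f x = c} = P ∩ {x | f x = c} from rfl]
    exact hPconv.inter (convex_hyperplane ⟨f.map_add, f.map_smul⟩ c)
  have hdim : ∀ i : Fin n, Module.finrank ℝ (vectorSpan ℝ (F i)) = (i : ℕ) := fun i => (hF.1 i).2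
  -- convenient membership facts
  have hv1' : ∀ (m : ℕ) (hm : m < n), v ⟨m, by omega⟩ ∈ intrinsicInterior ℝ (F ⟨m, hm⟩) := by
    intro m hm
    have h := hv1 ⟨m, hm⟩
    have he : (⟨m, hm⟩ : Fin n).castSucc = (⟨m, by omega⟩ : Fin (n + 1)) := Fin.ext (by simp)
    rwa [he] at h
  have hw1' : ∀ (m : ℕ) (hm : m < n), w ⟨m, by omega⟩ ∈ intrinsicInterior ℝ (F ⟨m, hm⟩) := by
    intro m hm
    have h := hw1 ⟨m, hm⟩
    have he : (⟨m, hm⟩ : Fin n).castSucc = (⟨m, by omega⟩ : Fin (n + 1)) := Fin.ext (by simp)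
    rwa [he] at h
  have hvF : ∀ (j : Fin (n + 1)) (i : Fin n), (j : ℕ) ≤ (i : ℕ) → v j ∈ F i := by
    intro j i hji
    have hjn : (j : ℕ) < n := lt_of_le_of_lt hji i.isLt
    have h1 : v j ∈ F ⟨(j : ℕ), hjn⟩ := intrinsicInterior_subset (hv1' (j : ℕ) hjn)
    exact hF.2 ⟨(j : ℕ), hjn⟩ i hji h1
  have hwF : ∀ (j : Fin (n + 1)) (i : Fin n), (j : ℕ) ≤ (i : ℕ) → w j ∈ F i := by
    intro j i hji
    have hjn : (j : ℕ) < n := lt_of_le_of_lt hji i.isLt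
    have h1 : w j ∈ F ⟨(j : ℕ), hjn⟩ := intrinsicInterior_subset (hw1' (j : ℕ) hjn)
    exact hF.2 ⟨(j : ℕ), hjn⟩ i hji h1
  -- the two affine bases
  have hcard : Fintype.card (Fin (n + 1)) = Module.finrank ℝ (Euc n) + 1 := by
    simp [finrank_euclideanSpace_fin]
  let bv : AffineBasis (Fin (n + 1)) ℝ (Euc n) :=
    ⟨v, hv, hv.affineSpan_eq_top_iff_card_eq_finrank_add_one.mpr hcard⟩
  let bw : AffineBasis (Fin (n + 1)) ℝ (Euc n) :=
    ⟨w, hw, hw.affineSpan_eq_top_iff_card_eq_finrank_add_one.mpr hcard⟩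
  have hbv : ⇑bv = v := rfl
  have hbw : ⇑bw = w := rfl
  -- the zeroth vertices agree
  have hvw0 : v ⟨0, by omega⟩ = w ⟨0, by omega⟩ := by
    rcases Nat.eq_zero_or_pos n with h0 | hpos
    · subst h0
      ext i; exact i.elim0
    · have hbot : vectorSpan ℝ (F ⟨0, hpos⟩) = ⊥ := by
        have h := hdim ⟨0, hpos⟩
        exact Submodule.finrank_eq_zero.mp (by simpa using h)
      have hm := vsub_mem_vectorSpan ℝ
        (intrinsicInterior_subset (hv1' 0 hpos)) (intrinsicInterior_subset (hw1' 0 hpos))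
      rw [hbot, Submodule.mem_bot] at hm
      exact sub_eq_zero.mp (by simpa [vsub_eq_sub] using hm)
  -- main induction
  have main : ∀ m : ℕ, m ≤ n → ∃ x : Euc n,
      (∀ hm : m < n, x ∈ intrinsicInterior ℝ (F ⟨m, hm⟩)) ∧
      (m = n → x ∈ interior P) ∧
      (∀ k : Fin (n + 1), (k : ℕ) ≤ m → 0 < bv.coord k x ∧ 0 < bw.coord k x) ∧
      (∀ k : Fin (n + 1), m < (k : ℕ) → bv.coord k x = 0 ∧ bw.coord k x = 0) := by
    intro m
    induction m with
    | zero =>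
      intro _
      refine ⟨v ⟨0, by omega⟩, fun hm => hv1' 0 hm, ?_, ?_, ?_⟩
      · intro h0
        have he : (⟨0, by omega⟩ : Fin (n + 1)) = Fin.last n := Fin.ext (show 0 = n by omega)
        rw [he]; exact hv2
      · intro k hk
        have hk0 : k = ⟨0, by omega⟩ := Fin.ext (show (k : ℕ) = 0 by omega)
        rw [hk0]
        constructor
        · rw [show v ⟨0, by omega⟩ = bv ⟨0, by omega⟩ from rfl, bv.coord_apply_eq]; norm_num
        · rw [hvw0, show w ⟨0, by omega⟩ = bw ⟨0, by omega⟩ from rfl, bw.coord_apply_eq]; norm_num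
      · intro k hk
        have hne : k ≠ (⟨0, by omega⟩ : Fin (n + 1)) := by
          intro h; rw [h] at hk; simp at hk
        constructor
        · rw [show v ⟨0, by omega⟩ = bv ⟨0, by omega⟩ from rfl]
          exact bv.coord_apply_ne hne
        · rw [hvw0, show w ⟨0, by omega⟩ = bw ⟨0, by omega⟩ from rfl]
          exact bw.coord_apply_ne hne
    | succ m ih =>
      intro hm1
      have hmn : m < n := by omega
      obtain ⟨x, hx1, -, hx3, hx4⟩ := ih (by omega)
      have hxF : x ∈ F ⟨m, hmn⟩ := intrinsicInterior_subset (hx1 hmn)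
      have hxP : x ∈ P := hFsub _ hxF
      obtain ⟨⟨f, c, hf0, hfle, -, hFeq⟩, -⟩ := hF.1 ⟨m, hmn⟩
      set vnext := v ⟨m + 1, by omega⟩ with hvnextdef
      set wnext := w ⟨m + 1, by omega⟩ with hwnextdef
      -- span identities at level m
      have hspanv : affineSpan ℝ (v '' {j : Fin (n + 1) | (j : ℕ) ≤ m})
          = affineSpan ℝ (F ⟨m, hmn⟩) :=
        aux_span_eq v hv _ (by simpa using hdim ⟨m, hmn⟩) (by omega)
          (fun j hj => hvF j ⟨m, hmn⟩ hj)
      have hspanw : affineSpan ℝ (w '' {j : Fin (n + 1) | (j : ℕ) ≤ m})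
          = affineSpan ℝ (F ⟨m, hmn⟩) :=
        aux_span_eq w hw _ (by simpa using hdim ⟨m, hmn⟩) (by omega)
          (fun j hj => hwF j ⟨m, hmn⟩ hj)
      -- membership of vnext, wnext in P / interior P and strict inequalities
      have hvnextP : (∀ h : m + 1 < n, vnext ∈ F ⟨m + 1, h⟩) ∧ vnext ∈ P := by
        rcases Nat.lt_or_ge (m + 1) n with h | h
        · have := intrinsicInterior_subset (hv1' (m + 1) h)
          exact ⟨fun _ => this, hFsub _ this⟩
        · have hn : m + 1 = n := by omega
          have he : (⟨m + 1, by omega⟩ : Fin (n + 1)) = Fin.last n := Fin.ext (show m + 1 = n by omega)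
          refine ⟨fun hc => absurd hc (by omega), ?_⟩
          rw [hvnextdef, he]
          exact interior_subset hv2
      have hwnextP : (∀ h : m + 1 < n, wnext ∈ F ⟨m + 1, h⟩) ∧ wnext ∈ P := by
        rcases Nat.lt_or_ge (m + 1) n with h | h
        · have := intrinsicInterior_subset (hw1' (m + 1) h)
          exact ⟨fun _ => this, hFsub _ this⟩
        · have hn : m + 1 = n := by omega
          have he : (⟨m + 1, by omega⟩ : Fin (n + 1)) = Fin.last n := Fin.ext (show m + 1 = n by omega)
          refine ⟨fun hc => absurd hc (by omega), ?_⟩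
          rw [hwnextdef, he]
          exact interior_subset hw2
      have hfv : f vnext < c := by
        rcases Nat.lt_or_ge (m + 1) n with h | h
        · exact aux_face_strict v hv f hfle hFeq hspanv (by omega) hvnextP.2
        · have hn : m + 1 = n := by omega
          have he : (⟨m + 1, by omega⟩ : Fin (n + 1)) = Fin.last n := Fin.ext (show m + 1 = n by omega)
          apply aux_interior_lt f hf0 hfle
          rw [hvnextdef, he]; exact hv2
      have hfw : f wnext < c := by
        rcases Nat.lt_or_ge (m + 1) n with h | h
        · exact aux_face_strict w hw f hfle hFeq hspanw (by omega) hwnextP.2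
        · have hn : m + 1 = n := by omega
          have he : (⟨m + 1, by omega⟩ : Fin (n + 1)) = Fin.last n := Fin.ext (show m + 1 = n by omega)
          apply aux_interior_lt f hf0 hfle
          rw [hwnextdef, he]; exact hw2
      -- vnext lies in the span of the first m+2 w-points
      have hvnextspan : vnext ∈ affineSpan ℝ (⇑bw '' {j : Fin (n + 1) | (j : ℕ) ≤ m + 1}) := by
        rw [hbw]
        rcases Nat.lt_or_ge (m + 1) n with h | h
        · have hspanw1 : affineSpan ℝ (w '' {j : Fin (n + 1) | (j : ℕ) ≤ m + 1})
              = affineSpan ℝ (F ⟨m + 1, h⟩) :=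
            aux_span_eq w hw _ (by simpa using hdim ⟨m + 1, h⟩) (by omega)
              (fun j hj => hwF j ⟨m + 1, h⟩ hj)
          rw [hspanw1]
          exact subset_affineSpan ℝ _ (hvnextP.1 h)
        · have huniv : {j : Fin (n + 1) | (j : ℕ) ≤ m + 1} = Set.univ :=
            eq_univ_of_forall fun j => by
              have := j.isLt
              simp only [Set.mem_setOf_eq]; omega
          rw [huniv, Set.image_univ, ← hbw, bw.tot]
          trivial
      -- coordinate facts for vnext w.r.t. bw
      have hgzero : ∀ j : Fin (n + 1), (j : ℕ) < m + 1 → auxG f c (bw j) = 0 := by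
        intro j hj
        have hjm : w j ∈ F ⟨m, hmn⟩ := hwF j ⟨m, hmn⟩ (Nat.lt_succ_iff.mp hj)
        rw [hFeq] at hjm
        simp [hbw, hjm.2]
      have hco := aux_coord (m + 1) (by omega) bw (auxG f c) hvnextspan hgzero
      have hbwpos : 0 < bw.coord ⟨m + 1, by omega⟩ vnext := by
        have he := hco.2
        rw [auxG_apply, auxG_apply, hbw] at he
        nlinarith [he, hfv, hfw]
      have hbwzero : ∀ k : Fin (n + 1), m + 1 < (k : ℕ) → bw.coord k vnext = 0 := hco.1
      -- choose t small
      have hev : ∀ᶠ t : ℝ in nhdsWithin 0 (Set.Ioi 0),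
          ((0 < t ∧ t < 1) ∧
            ∀ k : Fin (n + 1), (k : ℕ) ≤ m → 0 < (1 - t) * bw.coord k x + t * bw.coord k vnext) := by
        refine Filter.Eventually.and (Filter.Eventually.and ?_ ?_) ?_
        · exact eventually_mem_nhdsWithin.mono fun t ht => ht
        · have hmono : nhdsWithin (0:ℝ) (Set.Ioi 0) ≤ 𝓝 (0:ℝ) := nhdsWithin_le_nhds
          exact Filter.Eventually.filter_mono hmono (gt_mem_nhds zero_lt_one)
        · rw [Filter.eventually_all]
          intro k
          by_cases hk : (k : ℕ) ≤ m
          · have hc0 : 0 < bw.coord k x := (hx3 k hk).2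
            have hcont : Tendsto (fun t : ℝ => (1 - t) * bw.coord k x + t * bw.coord k vnext)
                (𝓝 0) (𝓝 (bw.coord k x)) := by
              have hc : Continuous fun t : ℝ =>
                  (1 - t) * bw.coord k x + t * bw.coord k vnext := by
                apply Continuous.add
                · exact (continuous_const.sub continuous_id).mul continuous_const
                · exact continuous_id.mul continuous_const
              simpa using hc.tendsto 0
            have hmono : nhdsWithin (0:ℝ) (Set.Ioi 0) ≤ 𝓝 (0:ℝ) := nhdsWithin_le_nhds
            have hev2 : ∀ᶠ t : ℝ in nhdsWithin 0 (Set.Ioi 0),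
                0 < (1 - t) * bw.coord k x + t * bw.coord k vnext :=
              Filter.Eventually.filter_mono hmono (hcont.eventually (eventually_gt_nhds hc0))
            exact hev2.mono fun t ht _ => ht
          · exact Filter.Eventually.of_forall fun t h => absurd h hk
      obtain ⟨t, ⟨ht0, ht1⟩, htc⟩ := hev.exists
      -- the new point
      refine ⟨(1 - t) • x + t • vnext, ?_, ?_, ?_, ?_⟩
      · -- intrinsic interior of F (m+1)
        intro hm'
        have hxF1 : x ∈ F ⟨m + 1, hm'⟩ := hF.2 ⟨m, hmn⟩ ⟨m + 1, hm'⟩ (Fin.mk_le_mk.mpr (by omega)) hxF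
        exact aux_relint_segment (hFconv _) (hv1' (m + 1) hm') hxF1 ht0 (le_of_lt ht1)
      · -- interior of P when m+1 = n
        intro hn
        have he : (⟨m + 1, by omega⟩ : Fin (n + 1)) = Fin.last n := Fin.ext (show m + 1 = n by omega)
        have hvint : vnext ∈ interior P := by rw [hvnextdef, he]; exact hv2
        have hcomb := hPconv.combo_interior_self_mem_interior (a := t) (b := 1 - t)
          hvint hxP ht0 (by linarith) (by ring)
        rwa [add_comm] at hcomb
      · -- positive coordinates
        intro k hk
        have happv : bv.coord k ((1 - t) • x + t • vnext)
            = (1 - t) * bv.coord k x + t * bv.coord k vnext := by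
          have h := (bv.coord k).apply_lineMap x vnext t
          rw [AffineMap.lineMap_apply_module, AffineMap.lineMap_apply_module] at h
          simpa [smul_eq_mul] using h
        have happw : bw.coord k ((1 - t) • x + t • vnext)
            = (1 - t) * bw.coord k x + t * bw.coord k vnext := by
          have h := (bw.coord k).apply_lineMap x vnext t
          rw [AffineMap.lineMap_apply_module, AffineMap.lineMap_apply_module] at h
          simpa [smul_eq_mul] using h
        rcases Nat.lt_or_ge (k : ℕ) (m + 1) with hkm | hkm
        · -- k ≤ m
          have hkm' : (k : ℕ) ≤ m := by omega
          constructor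
          · rw [happv]
            have h1 : 0 < bv.coord k x := (hx3 k hkm').1
            have h2 : bv.coord k vnext = 0 := by
              rw [show vnext = bv ⟨m + 1, by omega⟩ from rfl]
              exact bv.coord_apply_ne (fun h => by
                have := congrArg Fin.val h
                simp only [] at this
                omega)
            rw [h2]
            nlinarith
          · rw [happw]
            exact htc k hkm'
        · -- k = m + 1
          have hkeq : k = ⟨m + 1, by omega⟩ := Fin.ext (show (k : ℕ) = m + 1 by omega)
          constructor
          · rw [happv]
            have h1 : bv.coord k x = 0 := (hx4 k (by omega)).1
            have h2 : bv.coord k vnext = 1 := by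
              rw [hkeq, show vnext = bv ⟨m + 1, by omega⟩ from rfl]
              exact bv.coord_apply_eq _
            rw [h1, h2]
            nlinarith
          · rw [happw]
            have h1 : bw.coord k x = 0 := (hx4 k (by omega)).2
            have h2 : 0 < bw.coord k vnext := by rw [hkeq]; exact hbwpos
            rw [h1]
            nlinarith
      · -- vanishing coordinates
        intro k hk
        have happv : bv.coord k ((1 - t) • x + t • vnext)
            = (1 - t) * bv.coord k x + t * bv.coord k vnext := by
          have h := (bv.coord k).apply_lineMap x vnext t
          rw [AffineMap.lineMap_apply_module, AffineMap.lineMap_apply_module] at h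
          simpa [smul_eq_mul] using h
        have happw : bw.coord k ((1 - t) • x + t • vnext)
            = (1 - t) * bw.coord k x + t * bw.coord k vnext := by
          have h := (bw.coord k).apply_lineMap x vnext t
          rw [AffineMap.lineMap_apply_module, AffineMap.lineMap_apply_module] at h
          simpa [smul_eq_mul] using h
        constructor
        · rw [happv, (hx4 k (by omega)).1]
          have h2 : bv.coord k vnext = 0 := by
            rw [show vnext = bv ⟨m + 1, by omega⟩ from rfl]
            exact bv.coord_apply_ne (fun h => by
              have := congrArg Fin.val h
              simp only [] at this
              omega)
          rw [h2]; ring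
        · rw [happw, (hx4 k (by omega)).2, hbwzero k hk]; ring
  -- extract the vertex family
  have hex : ∀ i : Fin (n + 1), ∃ x : Euc n,
      (∀ hm : (i : ℕ) < n, x ∈ intrinsicInterior ℝ (F ⟨(i : ℕ), hm⟩)) ∧
      ((i : ℕ) = n → x ∈ interior P) ∧
      (∀ k : Fin (n + 1), (k : ℕ) ≤ (i : ℕ) → 0 < bv.coord k x ∧ 0 < bw.coord k x) ∧
      (∀ k : Fin (n + 1), (i : ℕ) < (k : ℕ) → bv.coord k x = 0 ∧ bw.coord k x = 0) :=
    fun i => main (i : ℕ) (Nat.lt_succ_iff.mp i.isLt)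
  choose u hu1 hu2 hu3 hu4 using hex
  -- affine independence of u
  have htri : (bv.toMatrix u).BlockTriangular OrderDual.toDual := by
    intro i j hij
    rw [OrderDual.toDual_lt_toDual] at hij
    exact (hu4 i j hij).1
  have hdet : (bv.toMatrix u).det ≠ 0 := by
    rw [Matrix.det_of_lowerTriangular _ htri]
    exact ne_of_gt (Finset.prod_pos fun i _ => (hu3 i i (le_refl _)).1)
  have hinv : bv.toMatrix u * (bv.toMatrix u)⁻¹ = 1 :=
    Matrix.mul_nonsing_inv _ (isUnit_iff_ne_zero.mpr hdet)
  have huind : AffineIndependent ℝ u := bv.affineIndependent_of_toMatrix_right_inv u hinv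
  -- the simplex
  refine ⟨convexHull ℝ (Set.range u), ⟨u, huind, rfl, ?_, ?_⟩, ?_⟩
  · intro i
    have h := hu1 i.castSucc (by simpa using i.isLt)
    convert h using 3
    exact Fin.ext (by simp)
  · exact hu2 (Fin.last n) (by simp)
  · -- containment
    have hsub1 : Set.range u ⊆ S₁ := by
      rintro y ⟨i, rfl⟩
      rw [hS1, ← hbv, bv.convexHull_eq_nonneg_coord]
      intro k
      rcases Nat.lt_or_ge (i : ℕ) (k : ℕ) with h | h
      · exact le_of_eq ((hu4 i k h).1).symm
      · exact le_of_lt ((hu3 i k h).1)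
    have hsub2 : Set.range u ⊆ S₂ := by
      rintro y ⟨i, rfl⟩
      rw [hS2, ← hbw, bw.convexHull_eq_nonneg_coord]
      intro k
      rcases Nat.lt_or_ge (i : ℕ) (k : ℕ) with h | h
      · exact le_of_eq ((hu4 i k h).2).symm
      · exact le_of_lt ((hu3 i k h).2)
    apply convexHull_min
    · exact Set.subset_inter hsub1 hsub2
    · exact Convex.inter (hS1 ▸ convex_convexHull ℝ _) (hS2 ▸ convex_convexHull ℝ _)

end
end

section
/- Let P be an n-polytope in ℝⁿ and let S be a flag simplex of P associated with a complete flag F of P. Then there exists a flag simplex T of P associated with F such that S ⊂ T ⊂ P and S is a flag simplex of T. -/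
open Set MeasureTheory Filter
open scoped Topology RealInnerProductSpace symmDiff

noncomputable section

variable {d : ℕ}

lemma aux_extend {C : Set (Euc d)} {x y : Euc d}
    (hx : x ∈ intrinsicInterior ℝ C) (hy : y ∈ affineSpan ℝ C) :
    ∃ s : ℝ, 0 < s ∧ x + s • (x - y) ∈ intrinsicInterior ℝ C := by
  have hxC : x ∈ C := intrinsicInterior_subset hx
  have hxM : x ∈ affineSpan ℝ C := subset_affineSpan ℝ C hxC
  obtain ⟨x', hx', hx'c⟩ := mem_intrinsicInterior.1 hx
  have hmem : ∀ t : ℝ, x + t • (x - y) ∈ affineSpan ℝ C := by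
    intro t
    have := AffineSubspace.smul_vsub_vadd_mem (affineSpan ℝ C) t hxM hy hxM
    simpa [vsub_eq_sub, vadd_eq_add, add_comm] using this
  set γ : ℝ → affineSpan ℝ C := fun t => ⟨x + t • (x - y), hmem t⟩ with hγdef
  have hcont : Continuous γ := by
    apply Continuous.subtype_mk
    fun_prop
  have hγ0 : γ 0 = x' := by
    apply Subtype.ext
    simp [hγdef, hx'c]
  have hnh : γ ⁻¹' (interior ((↑) ⁻¹' C : Set (affineSpan ℝ C))) ∈ 𝓝 (0:ℝ) := by
    refine (isOpen_interior.preimage hcont).mem_nhds ?_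
    simpa [hγ0] using hx'
  obtain ⟨ε, hε, hball⟩ := Metric.mem_nhds_iff.1 hnh
  refine ⟨ε/2, by positivity, ?_⟩
  have h2 : γ (ε/2) ∈ interior ((↑) ⁻¹' C : Set (affineSpan ℝ C)) := by
    apply hball
    simp only [Metric.mem_ball, Real.dist_eq, sub_zero]
    rw [abs_of_pos (by positivity)]
    linarith
  exact mem_intrinsicInterior.2 ⟨γ (ε/2), h2, rfl⟩

lemma aux_const {C : Set (Euc d)} {f : Euc d →L[ℝ] ℝ} {c : ℝ}
    (hle : ∀ p ∈ C, f p ≤ c) {x : Euc d} (hx : x ∈ intrinsicInterior ℝ C)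
    (hxc : f x = c) : ∀ y ∈ C, f y = c := by
  intro y hy
  obtain ⟨s, hs, hz⟩ := aux_extend hx (subset_affineSpan ℝ C hy)
  have hzC : x + s • (x - y) ∈ C := intrinsicInterior_subset hz
  have h1 := hle _ hzC
  rw [map_add, _root_.map_smul, map_sub, hxc] at h1
  have h2 := hle y hy
  rw [smul_eq_mul] at h1
  have : f y = c := by nlinarith
  exact this

lemma aux_intrinsic_subset_interior {s : Set (Euc d)} (h : affineSpan ℝ s = ⊤) :
    intrinsicInterior ℝ s ⊆ interior s := by
  intro x hx
  obtain ⟨y, hy, rfl⟩ := mem_intrinsicInterior.1 hx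
  have hopen : IsOpen ((affineSpan ℝ s : Set (Euc d))) := by
    rw [h]; simp only [AffineSubspace.top_coe]; exact isOpen_univ
  have hmap : IsOpenMap ((↑) : (affineSpan ℝ s) → Euc d) :=
    hopen.isOpenEmbedding_subtypeVal.isOpenMap
  have h1 : (y : Euc d) ∈ (↑) '' interior ((↑) ⁻¹' s : Set (affineSpan ℝ s)) :=
    ⟨y, hy, rfl⟩
  have h2 := hmap.image_interior_subset ((↑) ⁻¹' s) h1
  exact interior_mono (Set.image_preimage_subset _ _) h2

lemma aux_affineIndependent {m : ℕ} (p : Fin m → Euc d)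
    (h : ∀ k : Fin m, p k ∉ affineSpan ℝ (p '' {j | j < k})) :
    AffineIndependent ℝ p := by
  induction m with
  | zero => exact affineIndependent_of_subsingleton ℝ p
  | succ m ih =>
    have hind : AffineIndependent ℝ (p ∘ Fin.castSucc) := by
      apply ih
      intro k
      have hcast : Fin.castSucc '' {j : Fin m | j < k} = {j : Fin (m+1) | j < Fin.castSucc k} := by
        ext j
        simp only [Set.mem_image, Set.mem_setOf_eq]
        constructor
        · rintro ⟨j', hj', rfl⟩
          exact Fin.castSucc_lt_castSucc_iff.2 hj'
        · intro hj
          have hj' : j.val < k.val := by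
            simpa [Fin.lt_def] using hj
          have hjm : j.val < m := by
            have := k.isLt; omega
          exact ⟨⟨j.val, hjm⟩, by simpa [Fin.lt_def] using hj', Fin.ext (by simp)⟩
      have himg : (p ∘ Fin.castSucc) '' {j | j < k} = p '' {j | j < Fin.castSucc k} := by
        rw [Set.image_comp, hcast]
      rw [himg]
      exact h (Fin.castSucc k)
    have hlt : ∀ y : {y : Fin (m+1) // y ≠ Fin.last m}, (y : Fin (m+1)).val < m := by
      intro y
      have h2 : (y : Fin (m+1)).val ≠ m := by
        intro hv
        exact y.2 (Fin.ext (by simp [hv]))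
      have := (y : Fin (m+1)).isLt
      omega
    let e : {y : Fin (m+1) // y ≠ Fin.last m} ↪ Fin m :=
      ⟨fun y => ⟨(y : Fin (m+1)).val, hlt y⟩, by
        intro a b hab
        apply Subtype.ext
        apply Fin.ext
        simpa [Fin.ext_iff] using hab⟩
    have hsub : AffineIndependent ℝ fun x : {y : Fin (m+1) // y ≠ Fin.last m} => p x := by
      have h3 := hind.comp_embedding e
      convert h3 using 1
      funext x; exact congrArg p (Fin.ext rfl)
    apply hsub.affineIndependent_of_notMem_span
    have hset : {x : Fin (m+1) | x ≠ Fin.last m} = {j | j < Fin.last m} := by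
      ext j
      simp only [Set.mem_setOf_eq, Fin.lt_def, Fin.val_last, Ne, Fin.ext_iff]
      have := j.isLt
      omega
    rw [hset]
    exact h (Fin.last m)

lemma aux_mem_interior {m : ℕ} {p : Fin (m+1) → Euc d}
    (hp : AffineIndependent ℝ p) (htop : affineSpan ℝ (Set.range p) = ⊤)
    {a : Fin (m+1) → ℝ} (ha : ∀ j, 0 < a j) (hsum : ∑ j, a j = 1) :
    ∑ j, a j • p j ∈ interior (convexHull ℝ (Set.range p)) := by
  set b : AffineBasis (Fin (m+1)) ℝ (Euc d) := ⟨p, hp, htop⟩ with hbdef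
  have hb : ⇑b = p := rfl
  have hcomb : ∑ j, a j • p j = Finset.univ.affineCombination ℝ p a :=
    (Finset.univ.affineCombination_eq_linear_combination p a hsum).symm
  rw [show Set.range p = Set.range ⇑b from rfl, b.interior_convexHull]
  intro j
  rw [hcomb, show p = ⇑b from rfl,
    b.coord_apply_combination_of_mem (Finset.mem_univ j) hsum]
  exact ha j

lemma aux_mem_intrinsicInterior {m : ℕ} {p : Fin (m+1) → Euc d}
    (hp : AffineIndependent ℝ p) {a : Fin (m+1) → ℝ}
    (ha : ∀ j, 0 < a j) (hsum : ∑ j, a j = 1) :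
    ∑ j, a j • p j ∈ intrinsicInterior ℝ (convexHull ℝ (Set.range p)) := by
  classical
  set q0 := p 0 with hq0
  set D := vectorSpan ℝ (Set.range p) with hD
  have hmemD : ∀ j, p j - q0 ∈ D := fun j =>
    vsub_mem_vectorSpan ℝ (Set.mem_range_self j) (Set.mem_range_self 0)
  set p' : Fin (m+1) → D := fun j => ⟨p j - q0, hmemD j⟩ with hp'def
  have htrans : AffineIndependent ℝ (fun j => p j - q0) := by
    have h1 : AffineIndependent ℝ
        (((AffineEquiv.vaddConst ℝ q0).symm : Euc d →ᵃ[ℝ] Euc d) ∘ p) :=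
      hp.map' _ (AffineEquiv.vaddConst ℝ q0).symm.injective
    convert h1 using 1
    funext j; rfl
  have hp' : AffineIndependent ℝ p' := by
    apply AffineIndependent.of_comp D.subtype.toAffineMap
    exact htrans
  have hrk : Module.finrank ℝ D = m := hp.finrank_vectorSpan (by simp)
  have htop : affineSpan ℝ (Set.range p') = ⊤ :=
    hp'.affineSpan_eq_top_iff_card_eq_finrank_add_one.2 (by simp [hrk])
  set b : AffineBasis (Fin (m+1)) ℝ D := ⟨p', hp', htop⟩ with hbdef
  set x' : D := Finset.univ.affineCombination ℝ p' a with hx'def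
  have hcoords : ∀ j, 0 < b.coord j x' := by
    intro j
    rw [hx'def, show p' = ⇑b from rfl,
      b.coord_apply_combination_of_mem (Finset.mem_univ j) hsum]
    exact ha j
  have hx'int : x' ∈ interior (convexHull ℝ (Set.range ⇑b)) := by
    rw [b.interior_convexHull]; exact hcoords
  have hx'intr : x' ∈ intrinsicInterior ℝ (convexHull ℝ (Set.range ⇑b)) :=
    interior_subset_intrinsicInterior hx'int
  set χ : D →ᵃⁱ[ℝ] Euc d :=
    (AffineIsometryEquiv.constVAdd ℝ (Euc d) q0).toAffineIsometry.comp
      D.subtypeₗᵢ.toAffineIsometry with hχdef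
  have hχ : ∀ z : D, χ z = q0 + (z : Euc d) := by
    intro z
    simp [hχdef, AffineIsometryEquiv.constVAdd]
    rfl
  have key := χ.image_intrinsicInterior (convexHull ℝ (Set.range ⇑b))
  have hximg : χ x' ∈ intrinsicInterior ℝ (χ '' convexHull ℝ (Set.range ⇑b)) := by
    rw [key]; exact ⟨x', hx'intr, rfl⟩
  have himg : χ '' convexHull ℝ (Set.range ⇑b) = convexHull ℝ (Set.range p) := by
    rw [show ⇑χ = ⇑χ.toAffineMap from rfl, AffineMap.image_convexHull]
    congr 1
    rw [← Set.range_comp]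
    have hcb : (⇑χ.toAffineMap ∘ ⇑b) = p := by
      funext j
      show χ (p' j) = p j
      rw [hχ]
      simp [hp'def]
    rw [hcb]
  have hχx' : χ x' = ∑ j, a j • p j := by
    rw [hx'def, ← AffineIsometry.coe_toAffineMap,
      Finset.map_affineCombination _ p' a hsum χ.toAffineMap,
      Finset.univ.affineCombination_eq_linear_combination _ a hsum]
    congr 1
    funext j
    show a j • (χ (p' j)) = a j • p j
    rw [hχ]
    simp [hp'def]
  rw [← hχx', ← himg]
  exact hximg

/-- **Proposition (ii).** If `S` is a flag simplex of an `n`-polytope `P` associated with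
the complete flag `F`, then there exists a flag simplex `T` of `P` associated with `F`
such that `S ⊆ T ⊆ P` and `S` is a flag simplex of `T`. -/
theorem flag_simplex_enlargement (n : ℕ) (P : Set (Euc n)) (hP : IsPolytope P)
    (F : Fin n → Set (Euc n)) (hF : IsCompleteFlag n P F)
    (S : Set (Euc n)) (hS : IsFlagSimplexAssoc n P F S) :
    ∃ T : Set (Euc n), IsFlagSimplexAssoc n P F T ∧ S ⊆ T ∧ T ⊆ P ∧
      IsFlagSimplex n T S := by
  classical
  obtain ⟨v, hvind, hSeq, hvF, hvlast⟩ := hS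
  obtain ⟨VV, hVfin, hPeq, hPint⟩ := hP
  have hPconv : Convex ℝ P := by rw [hPeq]; exact convex_convexHull ℝ _
  have hPspan : affineSpan ℝ P = ⊤ := by
    apply affineSpan_eq_top_of_nonempty_interior
    rwa [hPconv.convexHull_eq]
  have hFface : ∀ i : Fin n, IsFace P (F i) := fun i => (hF.1 i).1
  have hFdim : ∀ i : Fin n, Module.finrank ℝ (vectorSpan ℝ (F i)) = (i : ℕ) :=
    fun i => (hF.1 i).2
  have hFP : ∀ i : Fin n, F i ⊆ P := by
    intro i
    obtain ⟨f, c, -, -, -, hFeq⟩ := hFface i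
    rw [hFeq]; exact fun x hx => hx.1
  set G : Fin (n+1) → Set (Euc n) := fun k =>
    if h : (k : ℕ) < n then F ⟨k, h⟩ else P with hGdef
  have hGlt : ∀ (k : Fin (n+1)) (h : (k:ℕ) < n), G k = F ⟨k, h⟩ := fun k h => dif_pos h
  have hGn : ∀ (k : Fin (n+1)), ¬ (k:ℕ) < n → G k = P := fun k h => dif_neg h
  have hGP : ∀ k, G k ⊆ P := by
    intro k
    by_cases h : (k:ℕ) < n
    · rw [hGlt k h]; exact hFP _
    · rw [hGn k h]
  have hGdim : ∀ k : Fin (n+1), Module.finrank ℝ (vectorSpan ℝ (G k)) = (k : ℕ) := by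
    intro k
    by_cases h : (k:ℕ) < n
    · rw [hGlt k h]; exact hFdim _
    · have hk : (k:ℕ) = n := by have := k.isLt; omega
      rw [hGn k h, ← direction_affineSpan, hPspan, AffineSubspace.direction_top,
        finrank_top, finrank_euclideanSpace_fin, hk]
  have hGmono : ∀ k l : Fin (n+1), (k:ℕ) ≤ (l:ℕ) → G k ⊆ G l := by
    intro k l hkl
    by_cases hl : (l:ℕ) < n
    · have hk : (k:ℕ) < n := by omega
      rw [hGlt k hk, hGlt l hl]
      exact hF.2 ⟨k, hk⟩ ⟨l, hl⟩ (by rw [Fin.le_def]; exact hkl)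
    · rw [hGn l hl]; exact hGP k
  have hvG : ∀ k, v k ∈ intrinsicInterior ℝ (G k) := by
    intro k
    by_cases h : (k:ℕ) < n
    · rw [hGlt k h]
      exact hvF ⟨k, h⟩
    · have hk : k = Fin.last n := by
        have := k.isLt
        apply Fin.ext
        simp only [Fin.val_last]
        omega
      rw [hGn k h, hk]
      exact interior_subset_intrinsicInterior hvlast
  -- separation
  have hsep : ∀ k : Fin (n+1), 0 < (k:ℕ) →
      ∃ A : AffineSubspace ℝ (Euc n),
        (∀ hlt : (k:ℕ) - 1 < n, F ⟨(k:ℕ) - 1, hlt⟩ ⊆ (A : Set (Euc n))) ∧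
        ∀ x ∈ intrinsicInterior ℝ (G k), x ∉ A := by
    intro k hk
    have hklt : (k:ℕ) - 1 < n := by have := k.isLt; omega
    obtain ⟨f, c, hf0, hfle, ⟨x₀, hx₀P, hx₀c⟩, hFeq⟩ := hFface ⟨(k:ℕ)-1, hklt⟩
    refine ⟨AffineSubspace.mk' x₀ (LinearMap.ker (f : Euc n →ₗ[ℝ] ℝ)), fun _ => ?_, ?_⟩
    · intro y hy
      rw [SetLike.mem_coe, AffineSubspace.mem_mk']
      have hyc : f y = c := by rw [hFeq] at hy; exact hy.2
      simp [LinearMap.mem_ker, vsub_eq_sub, map_sub, hyc, hx₀c]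
    · intro x hx hxA
      rw [AffineSubspace.mem_mk'] at hxA
      simp only [LinearMap.mem_ker, vsub_eq_sub, map_sub,
        ContinuousLinearMap.coe_coe, sub_eq_zero] at hxA
      have hxc : f x = c := by rw [hxA, hx₀c]
      have hsub : G k ⊆ F ⟨(k:ℕ)-1, hklt⟩ := by
        intro y hy
        rw [hFeq]
        exact ⟨hGP k hy, aux_const (fun p hp => hfle p (hGP k hp)) hx hxc y hy⟩
      have hle := Submodule.finrank_mono (vectorSpan_mono ℝ hsub)
      rw [hGdim k, hFdim ⟨(k:ℕ)-1, hklt⟩] at hle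
      simp only at hle
      omega
  have hpredlt : ∀ k : Fin (n+1), (k:ℕ) - 1 < n + 1 :=
    fun k => Nat.lt_of_le_of_lt (Nat.sub_le _ _) k.isLt
  set pr : Fin (n+1) → Fin (n+1) := fun k => ⟨(k:ℕ)-1, hpredlt k⟩ with hprdef
  have hEx : ∀ k : Fin (n+1), 0 < (k:ℕ) → ∃ s : ℝ, 0 < s ∧
      v k + s • (v k - v (pr k)) ∈ intrinsicInterior ℝ (G k) := by
    intro k hk
    apply aux_extend (hvG k)
    apply subset_affineSpan
    refine hGmono (pr k) k ?_ (intrinsicInterior_subset (hvG (pr k)))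
    simp only [hprdef]
    omega
  set w : Fin (n+1) → Euc n := fun k =>
    if h : 0 < (k:ℕ) then v k + (hEx k h).choose • (v k - v (pr k)) else v k with hwdef
  have hwG : ∀ k, w k ∈ intrinsicInterior ℝ (G k) := by
    intro k
    by_cases h : 0 < (k:ℕ)
    · simp only [hwdef, dif_pos h]
      exact (hEx k h).choose_spec.2
    · simp only [hwdef, dif_neg h]
      exact hvG k
  have hwP : ∀ k, w k ∈ P := fun k => hGP k (intrinsicInterior_subset (hwG k))
  set cc : Fin (n+1) → ℝ := fun k =>
    if h : 0 < (k:ℕ) then (1 + (hEx k h).choose)⁻¹ else 1 with hccdef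
  have hcc : ∀ k : Fin (n+1), 0 < (k:ℕ) → 0 < cc k ∧ cc k < 1 := by
    intro k h
    have hs := (hEx k h).choose_spec.1
    simp only [hccdef, dif_pos h]
    constructor
    · positivity
    · rw [inv_lt_one_iff₀]
      right
      linarith
  have hcombo : ∀ (k : Fin (n+1)) (h : 0 < (k:ℕ)),
      v k = cc k • w k + (1 - cc k) • v (pr k) := by
    intro k h
    set s := (hEx k h).choose with hsdef
    have hs : 0 < s := (hEx k h).choose_spec.1
    have h1s : (1:ℝ) + s ≠ 0 := by positivity
    have hwk : w k = v k + s • (v k - v (pr k)) := by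
      simp only [hwdef, dif_pos h]
      rfl
    have hcck : cc k = (1+s)⁻¹ := by
      simp only [hccdef, dif_pos h]
      rfl
    have key : (1+s) • v k = w k + s • v (pr k) := by
      rw [hwk]
      module
    have hco : (1:ℝ) - (1+s)⁻¹ = (1+s)⁻¹ * s := by field_simp; ring
    rw [hcck, hco, ← smul_smul, ← smul_add, ← key, smul_smul,
      inv_mul_cancel₀ h1s, one_smul]
  have hwspan : ∀ k : Fin (n+1), w k ∉ affineSpan ℝ (w '' {j | j < k}) := by
    intro k
    by_cases hk : 0 < (k:ℕ)
    · obtain ⟨A, hFA, hnotA⟩ := hsep k hk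
      intro hmem
      refine hnotA (w k) (hwG k) ?_
      have hklt : (k:ℕ) - 1 < n := by have := k.isLt; omega
      have hsubA : w '' {j | j < k} ⊆ (A : Set (Euc n)) := by
        rintro y ⟨j, hj, rfl⟩
        have hjk : (j:ℕ) < (k:ℕ) := hj
        have h1 : w j ∈ G (pr k) := by
          refine hGmono j (pr k) ?_ (intrinsicInterior_subset (hwG j))
          simp only [hprdef]
          omega
        rw [hGlt (pr k) (by simpa only [hprdef] using hklt)] at h1
        exact hFA hklt h1
      exact affineSpan_le.2 hsubA hmem
    · have hk0 : k = 0 := by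
        apply Fin.ext
        simp only [Fin.val_zero]
        omega
      have hempty : {j : Fin (n+1) | j < k} = ∅ := by
        ext j
        simp only [Set.mem_setOf_eq, Set.mem_empty_iff_false, iff_false, hk0]
        exact Fin.not_lt_zero j
      rw [hempty]
      simp only [Set.image_empty, AffineSubspace.span_empty]
      exact AffineSubspace.notMem_bot ℝ (Euc n) (w k)
  have hwind : AffineIndependent ℝ w := aux_affineIndependent w hwspan
  have htopw : affineSpan ℝ (Set.range w) = ⊤ :=
    hwind.affineSpan_eq_top_iff_card_eq_finrank_add_one.2
      (by simp [finrank_euclideanSpace_fin])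
  -- recursive coefficients
  set a : ℕ → Fin (n+1) → ℝ := fun m => Nat.rec
      (fun j : Fin (n+1) => if j = 0 then (1:ℝ) else 0)
      (fun m' am j => if hm : m' + 1 ≤ n then
          (if (j:ℕ) = m'+1 then cc ⟨m'+1, by omega⟩ else 0)
          + (1 - cc ⟨m'+1, by omega⟩) * am j
        else 0) m with hadef
  have ha0 : ∀ j, a 0 j = if j = 0 then (1:ℝ) else 0 := fun j => rfl
  have hasucc : ∀ (m' : ℕ) (hm : m' + 1 ≤ n) (j : Fin (n+1)), a (m'+1) j =
      (if (j:ℕ) = m'+1 then cc ⟨m'+1, by omega⟩ else 0)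
      + (1 - cc ⟨m'+1, by omega⟩) * a m' j := by
    intro m' hm j
    have h1 : a (m'+1) j = if hm : m' + 1 ≤ n then
        (if (j:ℕ) = m'+1 then cc ⟨m'+1, by omega⟩ else 0)
        + (1 - cc ⟨m'+1, by omega⟩) * a m' j
      else 0 := rfl
    rw [h1, dif_pos hm]
  have hmain : ∀ m : ℕ, ∀ hm : m ≤ n,
      (∀ j : Fin (n+1), (j:ℕ) ≤ m → 0 < a m j) ∧
      (∀ j : Fin (n+1), m < (j:ℕ) → a m j = 0) ∧
      (∑ j, a m j) = 1 ∧
      (∑ j, a m j • w j) = v ⟨m, by omega⟩ := by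
    intro m
    induction m with
    | zero =>
      intro hm
      refine ⟨?_, ?_, ?_, ?_⟩
      · intro j hj
        have hj0 : j = 0 := by
          apply Fin.ext
          simp only [Fin.val_zero]
          omega
        rw [ha0, if_pos hj0]
        norm_num
      · intro j hj
        have hj0 : j ≠ 0 := by
          intro h
          rw [h] at hj
          simp at hj
        rw [ha0, if_neg hj0]
      · simp only [ha0]
        simp
      · simp only [ha0, ite_smul, one_smul, zero_smul]
        rw [Finset.sum_ite_eq' Finset.univ (0 : Fin (n+1)) w]
        simp only [Finset.mem_univ, if_true]
        have hw0 : w 0 = v 0 := by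
          simp only [hwdef, Fin.val_zero]
          exact dif_neg (Nat.lt_irrefl 0)
        rw [hw0]
        congr 1
    | succ m' ih =>
      intro hm
      obtain ⟨ih1, ih2, ih3, ih4⟩ := ih (by omega)
      have hmlt : m' + 1 < n + 1 := by omega
      set k : Fin (n+1) := ⟨m'+1, hmlt⟩ with hkdef
      have hkpos : 0 < (k:ℕ) := by simp [hkdef]
      obtain ⟨hc0, hc1⟩ := hcc k hkpos
      have hcnn : 0 < 1 - cc k := by linarith
      have hav : ∀ j : Fin (n+1), a (m'+1) j =
          (if j = k then cc k else 0) + (1 - cc k) * a m' j := by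
        intro j
        rw [hasucc m' hm j]
        by_cases hjk : j = k
        · rw [if_pos (by rw [hjk]), if_pos hjk]
        · rw [if_neg (fun h => hjk (Fin.ext h)), if_neg hjk]
      refine ⟨?_, ?_, ?_, ?_⟩
      · intro j hj
        rw [hav j]
        by_cases hjk : j = k
        · rw [if_pos hjk, hjk, ih2 k (by simp [hkdef]), mul_zero, add_zero]
          exact hc0
        · rw [if_neg hjk]
          have hjm : (j:ℕ) ≤ m' := by
            have hne : (j:ℕ) ≠ m'+1 := fun h => hjk (Fin.ext h)
            omega
          have := mul_pos hcnn (ih1 j hjm)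
          linarith
      · intro j hj
        rw [hav j, if_neg (by
            intro h
            rw [h] at hj
            simp only [hkdef] at hj
            omega),
          ih2 j (by omega), mul_zero, add_zero]
      · rw [Finset.sum_congr rfl (fun j _ => hav j), Finset.sum_add_distrib,
          ← Finset.mul_sum, ih3]
        simp
      · rw [Finset.sum_congr rfl (fun j _ => by rw [hav j, add_smul])]
        rw [Finset.sum_add_distrib]
        have hs1 : ∑ j : Fin (n+1), (if j = k then cc k else 0) • w j = cc k • w k := by
          rw [Finset.sum_congr rfl (fun j _ => by rw [ite_smul, zero_smul])]
          simp
        have hs2 : ∑ j : Fin (n+1), ((1 - cc k) * a m' j) • w j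
            = (1 - cc k) • v ⟨m', by omega⟩ := by
          rw [Finset.sum_congr rfl (fun j _ => by rw [mul_smul]), ← Finset.smul_sum, ih4]
        rw [hs1, hs2]
        have := hcombo k hkpos
        have hprk : v (pr k) = v ⟨m', by omega⟩ := by
          congr 1
        rw [hprk] at this
        exact this.symm
  -- restriction of sums
  have hre : ∀ (M : Type) [AddCommMonoid M], ∀ (m : ℕ) (hm : m + 1 ≤ n + 1)
      (g : Fin (n+1) → M), (∀ j : Fin (n+1), m < (j:ℕ) → g j = 0) →
      ∑ j, g j = ∑ j : Fin (m+1), g (Fin.castLE hm j) := by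
    intro M _ m hm g hg
    have h1 : ∑ x ∈ Finset.univ.map (Fin.castLEEmb hm), g x = ∑ j, g j := by
      apply Finset.sum_subset (Finset.subset_univ _)
      intro x _ hx
      apply hg
      by_contra hle
      push_neg at hle
      exact hx (Finset.mem_map.2 ⟨⟨(x:ℕ), by omega⟩, Finset.mem_univ _, Fin.ext rfl⟩)
    rw [← h1, Finset.sum_map]
    rfl
  have hQind : ∀ (m : ℕ) (hm : m + 1 ≤ n + 1),
      AffineIndependent ℝ (fun j : Fin (m+1) => w (Fin.castLE hm j)) :=
    fun m hm => hwind.comp_embedding (Fin.castLEEmb hm)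
  have hQrange : ∀ (m : ℕ) (hm : m + 1 ≤ n + 1),
      Set.range (fun j : Fin (m+1) => w (Fin.castLE hm j))
        = w '' {j : Fin (n+1) | (j:ℕ) ≤ m} := by
    intro m hm
    ext x
    constructor
    · rintro ⟨j, rfl⟩
      exact ⟨Fin.castLE hm j, by
        simp only [Set.mem_setOf_eq, Fin.coe_castLE]
        omega, rfl⟩
    · rintro ⟨j, hj, rfl⟩
      have hjm : (j:ℕ) < m + 1 := by
        simp only [Set.mem_setOf_eq] at hj
        omega
      exact ⟨⟨(j:ℕ), hjm⟩, by congr 1⟩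
  have hrelint : ∀ (m : ℕ) (hm : m + 1 ≤ n + 1),
      v ⟨m, hm⟩ ∈ intrinsicInterior ℝ
        (convexHull ℝ (w '' {j : Fin (n+1) | (j:ℕ) ≤ m})) := by
    intro m hm
    have hmn : m ≤ n := by omega
    obtain ⟨h1, h2, h3, h4⟩ := hmain m hmn
    have hpos : ∀ j : Fin (m+1), 0 < a m (Fin.castLE hm j) :=
      fun j => h1 _ (by
        simp only [Fin.coe_castLE]
        omega)
    have hsum : ∑ j : Fin (m+1), a m (Fin.castLE hm j) = 1 := by
      rw [← hre ℝ m hm (a m) h2]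
      exact h3
    have hvec : v ⟨m, hm⟩
        = ∑ j : Fin (m+1), a m (Fin.castLE hm j) • w (Fin.castLE hm j) := by
      rw [← hre (Euc n) m hm (fun j => a m j • w j)
        (fun j hj => by show a m j • w j = 0; rw [h2 j hj, zero_smul])]
      exact h4.symm
    rw [hvec, ← hQrange m hm]
    exact aux_mem_intrinsicInterior (hQind m hm) hpos hsum
  set T := convexHull ℝ (Set.range w) with hTdef
  have hTconvex : Convex ℝ T := convex_convexHull ℝ _
  set b : AffineBasis (Fin (n+1)) ℝ (Euc n) := ⟨w, hwind, htopw⟩ with hbdef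
  have hbw : ⇑b = w := rfl
  have hcoordw : ∀ j l : Fin (n+1), b.coord j (w l) = if j = l then 1 else 0 :=
    fun j l => b.coord_apply j l
  have hTcoord : ∀ x ∈ T, ∀ j, 0 ≤ b.coord j x := by
    intro x hx j
    have h1 : x ∈ {y : Euc n | ∀ i, 0 ≤ b.coord i y} := by
      rw [← b.convexHull_eq_nonneg_coord]
      exact hx
    exact h1 j
  -- the faces of T
  set filt : Fin n → Finset (Fin (n+1)) :=
    fun i => Finset.univ.filter (fun j => (i:ℕ) < (j:ℕ)) with hfiltdef
  set hfun : Fin n → Euc n → ℝ := fun i x => ∑ j ∈ filt i, b.coord j x with hfundef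
  have hdec : ∀ (i : Fin n) (x : Euc n),
      hfun i x = (∑ j ∈ filt i, (b.coord j).linear) x + hfun i 0 := by
    intro i x
    have h1 : (∑ j ∈ filt i, (b.coord j).linear) x
        = ∑ j ∈ filt i, (b.coord j).linear x := by
      rw [LinearMap.coe_sum, Finset.sum_apply]
    have h2 : ∀ (g : Euc n →ᵃ[ℝ] ℝ) (y : Euc n), g y = g.linear y + g 0 := by
      intro g y
      conv_lhs => rw [AffineMap.decomp g]
      rfl
    simp only [hfundef]
    rw [h1, ← Finset.sum_add_distrib]
    exact Finset.sum_congr rfl (fun j _ => h2 _ x)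
  have hfw : ∀ (i : Fin n) (l : Fin (n+1)),
      hfun i (w l) = if (i:ℕ) < (l:ℕ) then 1 else 0 := by
    intro i l
    simp only [hfundef]
    rw [Finset.sum_congr rfl (fun j _ => hcoordw j l),
      Finset.sum_ite_eq' (filt i) l (fun _ => (1:ℝ))]
    simp [hfiltdef]
  have hw0T : w 0 ∈ T := subset_convexHull ℝ _ (Set.mem_range_self 0)
  have hfaces : ∀ i : Fin n,
      IsFace T (convexHull ℝ (w '' {j : Fin (n+1) | (j:ℕ) ≤ (i:ℕ)})) := by
    intro i
    set L : Euc n →ₗ[ℝ] ℝ := ∑ j ∈ filt i, (b.coord j).linear with hLdef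
    set fC : Euc n →L[ℝ] ℝ := -(LinearMap.toContinuousLinearMap L) with hfCdef
    have hfCx : ∀ x, fC x = -(L x) := fun x => rfl
    have hfw0 : hfun i (w 0) = 0 := by
      rw [hfw i 0, if_neg (by simp)]
    refine ⟨fC, hfun i 0, ?_, ?_, ⟨w 0, hw0T, ?_⟩, ?_⟩
    · intro h0
      have hL0 : ∀ x, L x = 0 := by
        intro x
        have := congrFun (congrArg (fun (g : Euc n →L[ℝ] ℝ) => (g : Euc n → ℝ)) h0) x
        simp only [hfCx] at this
        simpa using this
      have ha := hdec i (w (Fin.last n))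
      have hb := hdec i (w 0)
      rw [← hLdef, hL0, hfw] at ha
      rw [← hLdef, hL0, hfw] at hb
      rw [if_pos (by simp [Fin.val_last, i.isLt])] at ha
      rw [if_neg (by simp)] at hb
      linarith
    · intro x hx
      have h1 : 0 ≤ hfun i x := Finset.sum_nonneg (fun j _ => hTcoord x hx j)
      have h2 := hdec i x
      rw [hfCx]
      rw [← hLdef] at h2
      linarith
    · have h2 := hdec i (w 0)
      rw [hfw0, ← hLdef] at h2
      rw [hfCx]
      linarith
    · ext x
      simp only [Set.mem_setOf_eq]
      constructor
      · intro hxm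
        have hxT : x ∈ T :=
          convexHull_mono (Set.image_subset_range w _) hxm
        refine ⟨hxT, ?_⟩
        have hz : ∀ j ∈ filt i, b.coord j x = 0 := by
          intro j hj
          have hji : (i:ℕ) < (j:ℕ) := by
            simpa [hfiltdef] using hj
          have hsubz : convexHull ℝ (w '' {l : Fin (n+1) | (l:ℕ) ≤ (i:ℕ)})
              ⊆ (b.coord j) ⁻¹' {0} := by
            apply convexHull_min ?_
              ((convex_singleton (0:ℝ)).affine_preimage (b.coord j))
            rintro y ⟨l, hl, rfl⟩
            simp only [Set.mem_setOf_eq] at hl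
            have hjl : j ≠ l := by
              intro h
              rw [h] at hji
              omega
            simp only [Set.mem_preimage, Set.mem_singleton_iff]
            rw [hcoordw j l, if_neg hjl]
          exact hsubz hxm
        have h0 : hfun i x = 0 := Finset.sum_eq_zero hz
        have h2 := hdec i x
        rw [h0, ← hLdef] at h2
        rw [hfCx]
        linarith
      · rintro ⟨hxT, hfx⟩
        have h2 := hdec i x
        rw [← hLdef] at h2
        rw [hfCx] at hfx
        have h0 : hfun i x = 0 := by linarith
        have hz : ∀ j ∈ filt i, b.coord j x = 0 :=
          (Finset.sum_eq_zero_iff_of_nonneg (fun j _ => hTcoord x hxT j)).1 h0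
        have hxcomb : x = ∑ j, b.coord j x • w j := by
          conv_lhs => rw [← b.affineCombination_coord_eq_self x]
          rw [Finset.affineCombination_eq_linear_combination _ _ _
            (b.sum_coord_apply_eq_one x)]
          rfl
        set t' : Finset (Fin (n+1)) :=
          Finset.univ.filter (fun j => (j:ℕ) ≤ (i:ℕ)) with ht'def
        have hmemfilt : ∀ j : Fin (n+1), j ∉ t' → j ∈ filt i := by
          intro j hj
          simp only [ht'def, Finset.mem_filter, Finset.mem_univ, true_and, not_le] at hj
          simp only [hfiltdef, Finset.mem_filter, Finset.mem_univ, true_and]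
          exact hj
        have hzero' : ∀ j ∈ Finset.univ, j ∉ t' → b.coord j x • w j = 0 := by
          intro j _ hj
          rw [hz j (hmemfilt j hj), zero_smul]
        have hx2 : x = ∑ j ∈ t', b.coord j x • w j := by
          conv_lhs => rw [hxcomb]
          exact (Finset.sum_subset (Finset.subset_univ _) hzero').symm
        have hsum1 : ∑ j ∈ t', b.coord j x = 1 := by
          rw [← b.sum_coord_apply_eq_one x]
          exact Finset.sum_subset (Finset.subset_univ _)
            (fun j _ hj => hz j (hmemfilt j hj))
        rw [hx2]
        refine (convex_convexHull ℝ _).sum_mem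
          (fun j _ => hTcoord x hxT j) hsum1 (fun j hj => ?_)
        apply subset_convexHull
        refine ⟨j, ?_, rfl⟩
        simpa [ht'def] using hj
  have hfacedim : ∀ i : Fin n, Module.finrank ℝ
      (vectorSpan ℝ (convexHull ℝ (w '' {j : Fin (n+1) | (j:ℕ) ≤ (i:ℕ)}))) = (i:ℕ) := by
    intro i
    have him : (i:ℕ) + 1 ≤ n + 1 := by
      have := i.isLt
      omega
    rw [← direction_affineSpan, affineSpan_convexHull, direction_affineSpan,
      ← hQrange (i:ℕ) him]
    exact (hQind (i:ℕ) him).finrank_vectorSpan (by simp)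
  -- assembly
  refine ⟨T, ⟨w, hwind, hTdef, ?_, ?_⟩, ?_, ?_, ?_⟩
  · intro i
    have h := hwG i.castSucc
    rw [hGlt i.castSucc (by simp only [Fin.coe_castSucc]; exact i.isLt)] at h
    exact h
  · have h := hwG (Fin.last n)
    rw [hGn _ (by simp)] at h
    exact aux_intrinsic_subset_interior hPspan h
  · rw [hSeq]
    apply convexHull_min ?_ hTconvex
    rintro x ⟨k, rfl⟩
    have hk : (k:ℕ) + 1 ≤ n + 1 := k.isLt
    have h := intrinsicInterior_subset (hrelint (k:ℕ) hk)
    have hk2 : v (⟨(k:ℕ), hk⟩ : Fin (n+1)) = v k := by congr 1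
    rw [hk2] at h
    exact convexHull_mono (Set.image_subset_range w _) h
  · exact convexHull_min (by rintro x ⟨k, rfl⟩; exact hwP k) hPconv
  · refine ⟨fun i => convexHull ℝ (w '' {j : Fin (n+1) | (j:ℕ) ≤ (i:ℕ)}),
      ⟨fun i => ⟨hfaces i, hfacedim i⟩, ?_⟩, v, hvind, hSeq, ?_, ?_⟩
    · intro i j hij
      apply convexHull_mono
      apply Set.image_mono
      intro l hl
      simp only [Set.mem_setOf_eq] at hl ⊢
      have : (i:ℕ) ≤ (j:ℕ) := hij
      omega
    · intro i
      exact hrelint (i:ℕ) (by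
        have := i.isLt
        omega)
    · obtain ⟨h1, h2, h3, h4⟩ := hmain n le_rfl
      have h5 : v (Fin.last n) = ∑ j, a n j • w j := h4.symm
      rw [h5, hTdef]
      exact aux_mem_interior hwind htopw (fun j => h1 j (by omega)) h3
end
end

section
/- Let P be an n-polytope in ℝⁿ and let S be a flag simplex of P. Then there exists an n-simplex T with P ⊂ T such that S is also a flag simplex of T. -/
open Set MeasureTheory Filter
open scoped Topology RealInnerProductSpace symmDiff

noncomputable section

variable {d : ℕ}

set_option maxRecDepth 10000 in
lemma intrinsicInterior_subset_of_affineSpan_eq {s t : Set (Euc d)} (hst : s ⊆ t)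
    (h : affineSpan ℝ s = affineSpan ℝ t) :
    intrinsicInterior ℝ s ⊆ intrinsicInterior ℝ t := by
  unfold intrinsicInterior
  rw [← h]
  exact image_mono (interior_mono (preimage_mono hst))

set_option maxRecDepth 10000 in
set_option maxHeartbeats 2000000 in
theorem aux_pos (n : ℕ) (hn : 0 < n) (P : Set (Euc n)) (hP : IsPolytope P)
    (S : Set (Euc n)) (hS : IsFlagSimplex n P S) :
    ∃ T : Set (Euc n), IsSimplex n T ∧ P ⊆ T ∧ IsFlagSimplex n T S := by
  classical
  haveI : NeZero n := ⟨hn.ne'⟩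
  obtain ⟨V, hVfin, hPV, hPint⟩ := hP
  obtain ⟨F, ⟨hFdim, hFmono⟩, vS, hvindep, hSeq, hvmem, hvlast⟩ := hS
  choose f c hf0 hfle hfex hFeq using fun i => (hFdim i).1
  have hFrank : ∀ i : Fin n, Module.finrank ℝ (vectorSpan ℝ (F i)) = i :=
    fun i => (hFdim i).2
  have hPne : P.Nonempty := hPint.mono interior_subset
  have hFsubP : ∀ i, F i ⊆ P := fun i => by rw [hFeq i]; exact sep_subset _ _
  have hfc : ∀ i, ∀ x ∈ F i, f i x = c i := fun i x hx => by
    rw [hFeq i] at hx; exact hx.2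
  have hFne : ∀ i, (F i).Nonempty := fun i => by
    obtain ⟨x, hxP, hxc⟩ := hfex i
    exact ⟨x, by rw [hFeq i]; exact ⟨hxP, hxc⟩⟩
  have hvsP : vectorSpan ℝ P = ⊤ := by
    have h1 : affineSpan ℝ P = ⊤ := by
      rw [hPV, affineSpan_convexHull]
      exact affineSpan_eq_top_of_nonempty_interior (by rw [← hPV]; exact hPint)
    rw [← direction_affineSpan, h1, AffineSubspace.direction_top]
  -- the snoc family
  set F' : Fin (n + 1) → Set (Euc n) := Fin.snoc F P with hF'def
  have hF'last : F' (Fin.last n) = P := Fin.snoc_last _ _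
  have hF'cast : ∀ i : Fin n, F' i.castSucc = F i := fun i => Fin.snoc_castSucc _ _ _
  have hF'subP : ∀ i, F' i ⊆ P := by
    intro i
    refine Fin.lastCases ?_ ?_ i
    · rw [hF'last]
    · intro j; rw [hF'cast]; exact hFsubP j
  have hF'rank : ∀ i : Fin (n + 1), Module.finrank ℝ (vectorSpan ℝ (F' i)) = i := by
    intro i
    refine Fin.lastCases ?_ ?_ i
    · rw [hF'last, hvsP, finrank_top, Fin.val_last, finrank_euclideanSpace_fin]
    · intro j; rw [hF'cast, hFrank, Fin.coe_castSucc]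
  have hF'mono : ∀ i j : Fin (n + 1), i ≤ j → F' i ⊆ F' j := by
    intro i j hij x hx
    by_cases hj : j = Fin.last n
    · subst hj; rw [hF'last]; exact hF'subP i hx
    · have hi : i ≠ Fin.last n := by
        intro h; subst h
        exact hj (le_antisymm (Fin.le_last j) hij)
      have hi' : i = (i.castPred hi).castSucc := (Fin.castSucc_castPred _ _).symm
      have hj' : j = (j.castPred hj).castSucc := (Fin.castSucc_castPred _ _).symm
      rw [hj', hF'cast]
      rw [hi', hF'cast] at hx
      exact hFmono _ _ hij hx
  -- the key structural claim
  have key : ∀ i : Fin (n + 1), vectorSpan ℝ (F' i) =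
      ⨅ (j : Fin n) (_ : i ≤ j.castSucc), LinearMap.ker ((f j).toLinearMap) := by
    intro i
    refine Fin.reverseInduction ?_ ?_ i
    · rw [hF'last, hvsP]
      symm
      rw [eq_top_iff]
      refine le_iInf fun j => le_iInf fun hj => absurd hj ?_
      exact not_le.mpr (Fin.castSucc_lt_last j)
    · intro i IH
      have hBker : vectorSpan ℝ (F i) ≤ LinearMap.ker ((f i).toLinearMap) := by
        rw [vectorSpan_def, Submodule.span_le]
        rintro v ⟨a, ha, b, hb, rfl⟩
        rw [SetLike.mem_coe, LinearMap.mem_ker]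
        simp only [vsub_eq_sub, ContinuousLinearMap.coe_coe, map_sub,
          hfc i a ha, hfc i b hb, sub_self]
      have hCnot : ¬ vectorSpan ℝ (F' i.succ) ≤ LinearMap.ker ((f i).toLinearMap) := by
        intro hle
        have hsubF : F' i.succ ⊆ F i := by
          intro x hx
          obtain ⟨x₀, hx₀⟩ := hFne i
          have hx₀' : x₀ ∈ F' i.succ := by
            refine hF'mono i.castSucc i.succ (Fin.castSucc_le_succ i) ?_
            rw [hF'cast]; exact hx₀
          have hmem : x -ᵥ x₀ ∈ vectorSpan ℝ (F' i.succ) :=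
            vsub_mem_vectorSpan ℝ hx hx₀'
          have hker := hle hmem
          rw [LinearMap.mem_ker] at hker
          have hfx : f i x = c i := by
            rw [vsub_eq_sub, ContinuousLinearMap.coe_coe, map_sub] at hker
            have h2 := hfc i x₀ hx₀
            linarith
          rw [hFeq i]
          exact ⟨hF'subP _ hx, hfx⟩
        have hled : vectorSpan ℝ (F' i.succ) ≤ vectorSpan ℝ (F' i.castSucc) := by
          rw [hF'cast]; exact vectorSpan_mono ℝ hsubF
        have := Submodule.finrank_mono hled
        rw [hF'rank, hF'rank, Fin.val_succ, Fin.coe_castSucc] at this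
        omega
      have hD : vectorSpan ℝ (F' i.castSucc) =
          vectorSpan ℝ (F' i.succ) ⊓ LinearMap.ker ((f i).toLinearMap) := by
        refine Submodule.eq_of_le_of_finrank_le
          (le_inf ?_ ?_) ?_
        · exact vectorSpan_mono ℝ (hF'mono _ _ (Fin.castSucc_le_succ i))
        · rw [hF'cast]; exact hBker
        · have hlt : vectorSpan ℝ (F' i.succ) ⊓ LinearMap.ker ((f i).toLinearMap) <
              vectorSpan ℝ (F' i.succ) := by
            refine lt_of_le_of_ne inf_le_left fun hcon => ?_
            exact hCnot (hcon ▸ inf_le_right)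
          have := Submodule.finrank_lt_finrank_of_lt hlt
          rw [hF'rank] at this ⊢
          rw [Fin.val_succ] at this
          rw [Fin.coe_castSucc]
          omega
      have hE : (⨅ (j : Fin n) (_ : i.castSucc ≤ j.castSucc),
            LinearMap.ker ((f j).toLinearMap)) =
          (⨅ (j : Fin n) (_ : i.succ ≤ j.castSucc), LinearMap.ker ((f j).toLinearMap)) ⊓
            LinearMap.ker ((f i).toLinearMap) := by
        refine le_antisymm (le_inf ?_ ?_) ?_
        · refine le_iInf fun j => le_iInf fun hj => ?_
          refine iInf_le_of_le j (iInf_le _ ?_)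
          exact le_trans (Fin.castSucc_le_succ i) hj
        · exact iInf_le_of_le i (iInf_le _ le_rfl)
        · refine le_iInf fun j => le_iInf fun hj => ?_
          rcases eq_or_lt_of_le (Fin.castSucc_le_castSucc_iff.mp hj) with h | h
          · subst h; exact inf_le_right
          · refine le_trans inf_le_left (iInf_le_of_le j (iInf_le _ ?_))
            rw [Fin.succ_le_castSucc_iff]
            exact h
      rw [hD, hE, IH]
  -- the linear equivalence
  set Φ : Euc n →ₗ[ℝ] (Fin n → ℝ) :=
    -(LinearMap.pi fun j : Fin n => (f j).toLinearMap) with hΦdef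
  have hΦapp : ∀ x j, Φ x j = -(f j x) := by
    intro x j
    simp [hΦdef, LinearMap.pi_apply]
  have hkerΦ : LinearMap.ker Φ = ⊥ := by
    have h1 : LinearMap.ker Φ = ⨅ j : Fin n, LinearMap.ker ((f j).toLinearMap) := by
      rw [← LinearMap.ker_pi]
      ext x
      simp [hΦdef, LinearMap.mem_ker, neg_eq_zero]
    have h2 := key 0
    have h02 : F' (0 : Fin (n + 1)) = F 0 := by
      have := hF'cast 0
      simpa using this
    have h3 : vectorSpan ℝ (F 0) = ⊥ :=
      Submodule.finrank_eq_zero.mp (by simpa using hFrank 0)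
    rw [h02, h3] at h2
    rw [h1, eq_bot_iff]
    refine le_trans (le_iInf fun j => le_iInf fun _ => iInf_le _ j) (le_of_eq h2.symm)
  have hΦinj : Function.Injective Φ := LinearMap.ker_eq_bot.mp hkerΦ
  have hΦrank : Module.finrank ℝ (Euc n) = Module.finrank ℝ (Fin n → ℝ) := by
    simp [finrank_euclideanSpace_fin]
  set E : Euc n ≃ₗ[ℝ] (Fin n → ℝ) := Φ.linearEquivOfInjective hΦinj hΦrank with hEdef
  have hEapp : ∀ x j, E x j = -(f j x) := by
    intro x j
    rw [hEdef, LinearMap.linearEquivOfInjective_apply, hΦapp]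
  -- the basis and apex
  set B : Module.Basis (Fin n) ℝ (Euc n) := (Pi.basisFun ℝ (Fin n)).map E.symm with hBdef
  have hEB : ∀ k, E (B k) = Pi.single k 1 := by
    intro k
    rw [hBdef, Module.Basis.map_apply, Pi.basisFun_apply, LinearEquiv.apply_symm_apply]
  have hfB : ∀ j k, f j (B k) = if j = k then (-1 : ℝ) else 0 := by
    intro j k
    have h1 : E (B k) j = -(f j (B k)) := hEapp _ _
    rw [hEB k] at h1
    rw [Pi.single_apply] at h1
    split_ifs at h1 ⊢ with h
    · linarith
    · linarith
  set p : Euc n := E.symm (fun j => -(c j)) with hpdef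
  have hfp : ∀ j, f j p = c j := by
    intro j
    have h1 : E p j = -(f j p) := hEapp _ _
    rw [hpdef, LinearEquiv.apply_symm_apply] at h1
    linarith [h1]
  -- representation of any point
  have hrep : ∀ x : Euc n, x = p + ∑ j : Fin n, (c j - f j x) • B j := by
    intro x
    apply E.injective
    funext j
    simp only [map_add, map_sum, _root_.map_smul, Pi.add_apply, Finset.sum_apply, Pi.smul_apply,
      hEB, Pi.single_apply, smul_eq_mul, mul_ite, mul_one, mul_zero, Finset.sum_ite_eq,
      Finset.mem_univ, if_true]
    rw [hEapp x j, hpdef, LinearEquiv.apply_symm_apply]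
    ring
  -- the functional g and the maximum over P
  set g : Euc n →L[ℝ] ℝ := -(∑ j : Fin n, f j) with hgdef
  have hgapp : ∀ x, g x = -∑ j : Fin n, f j x := by
    intro x
    simp [hgdef, ContinuousLinearMap.sum_apply]
  have hgp : g p = -∑ j : Fin n, c j := by
    rw [hgapp]
    simp [hfp]
  set i₀ : Fin n := ⟨0, hn⟩ with hi₀def
  have hgB0 : g (B i₀) = 1 := by
    rw [hgapp]
    rw [Finset.sum_congr rfl fun k _ => hfB k i₀]
    rw [Finset.sum_ite_eq' Finset.univ i₀ (fun _ => (-1 : ℝ))]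
    simp
  have hgmono : ∀ x : Euc n, (∀ j, f j x ≤ c j) → g p ≤ g x := by
    intro x hx
    rw [hgp, hgapp, neg_le_neg_iff]
    exact Finset.sum_le_sum fun j _ => hx j
  have hPcomp : IsCompact P := by
    rw [hPV]; exact hVfin.isCompact_convexHull (𝕜 := ℝ)
  obtain ⟨xm, hxmP, hxm'⟩ := hPcomp.exists_isMaxOn hPne g.continuous.continuousOn
  have hxm : ∀ x ∈ P, g x ≤ g xm := fun x hx => hxm' hx
  set e₀ : ℝ := g xm with he₀def
  have hge : ∀ x ∈ P, g x ≤ e₀ := hxm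
  have hgplt : g p < e₀ := by
    by_contra hcon
    push_neg at hcon
    have hconst : ∀ x ∈ P, g x = g p := fun x hx =>
      le_antisymm ((hge x hx).trans hcon) (hgmono x fun j => hfle j x hx)
    have hker : vectorSpan ℝ P ≤ LinearMap.ker (g.toLinearMap) := by
      rw [vectorSpan_def, Submodule.span_le]
      rintro v ⟨a, ha, b, hb, rfl⟩
      rw [SetLike.mem_coe, LinearMap.mem_ker]
      simp only [vsub_eq_sub, ContinuousLinearMap.coe_coe, map_sub,
        hconst a ha, hconst b hb, sub_self]
    rw [hvsP, top_le_iff] at hker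
    have : g (B i₀) = 0 := by
      have := (LinearMap.mem_ker).mp (hker ▸ Submodule.mem_top :
        B i₀ ∈ LinearMap.ker g.toLinearMap)
      simpa using this
    rw [hgB0] at this
    norm_num at this
  set t : ℝ := e₀ - g p with htdef
  have ht : 0 < t := sub_pos.mpr hgplt
  -- the simplex vertices
  set u : Fin (n + 1) → Euc n :=
    fun k => if h : (k : ℕ) < n then p + t • B ⟨k, h⟩ else p with hudef
  have hulast : u (Fin.last n) = p := by
    rw [hudef]; simp
  have hucast : ∀ k : Fin n, u k.castSucc = p + t • B k := by
    intro k
    rw [hudef]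
    simp only [Fin.coe_castSucc, k.isLt, dif_pos, Fin.eta]
  -- values of f and g on vertices
  have hfu : ∀ (j k : Fin n), f j (p + t • B k) = c j + t * (if j = k then -1 else 0) := by
    intro j k
    rw [map_add, _root_.map_smul, hfp, hfB, smul_eq_mul]
  have hgu : ∀ k : Fin n, g (p + t • B k) = e₀ := by
    intro k
    rw [map_add, _root_.map_smul, smul_eq_mul]
    have : g (B k) = 1 := by
      rw [hgapp]
      rw [Finset.sum_congr rfl fun j _ => hfB j k]
      rw [Finset.sum_ite_eq' Finset.univ k (fun _ => (-1 : ℝ))]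
      simp
    rw [this, htdef]
    ring
  -- affine independence of the vertices
  have hindep : AffineIndependent ℝ u := by
    rw [affineIndependent_iff_linearIndependent_vsub ℝ u (Fin.last n)]
    have L : LinearIndependent ℝ (fun k : Fin n => t • B k) := by
      have := B.linearIndependent.map' (t • (LinearMap.id : Euc n →ₗ[ℝ] Euc n))
        (by rw [LinearMap.ker_smul _ _ ht.ne', LinearMap.ker_id])
      convert this using 1
      · funext k; simp
      · rfl
    have heq : (fun i : {x : Fin (n + 1) // x ≠ Fin.last n} => u i -ᵥ u (Fin.last n)) =
        (fun k : Fin n => t • B k) ∘ (fun i => Fin.castPred i.val i.prop) := by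
      funext i
      have h1 : (Fin.castPred i.val i.prop).castSucc = (i : Fin (n + 1)) :=
        Fin.castSucc_castPred _ _
      have h2 := hucast (Fin.castPred i.val i.prop)
      rw [h1] at h2
      rw [Function.comp_apply, h2, hulast, vsub_eq_sub]
      abel
    rw [heq]
    refine L.comp _ fun a b hab => ?_
    have := congrArg Fin.castSucc hab
    rw [Fin.castSucc_castPred, Fin.castSucc_castPred] at this
    exact Subtype.ext this
  -- the circumscribed simplex
  set T : Set (Euc n) := convexHull ℝ (Set.range u) with hTdef
  have hpT : p ∈ T := by
    rw [← hulast]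
    exact subset_convexHull ℝ _ ⟨Fin.last n, rfl⟩
  have hTchar : T = {x | (∀ j, f j x ≤ c j) ∧ g x ≤ e₀} := by
    apply Subset.antisymm
    · refine convexHull_min ?_ ?_
      · rintro x ⟨k, rfl⟩
        by_cases hk : (k : ℕ) < n
        · have : k = (⟨(k : ℕ), hk⟩ : Fin n).castSucc := by
            ext; simp
          rw [this, hucast]
          constructor
          · intro j
            rw [hfu]
            split_ifs with h
            · nlinarith
            · simp
          · rw [hgu]
        · have : k = Fin.last n := by
            ext; simp only [Fin.val_last]; omega
          rw [this, hulast]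
          exact ⟨fun j => le_of_eq (hfp j), le_of_lt hgplt⟩
      · have h1 : Convex ℝ {x : Euc n | ∀ j, f j x ≤ c j} := by
          have : {x : Euc n | ∀ j, f j x ≤ c j} = ⋂ j, {x | f j x ≤ c j} := by
            ext x; simp [mem_iInter]
          rw [this]
          exact convex_iInter fun j => convex_halfSpace_le
            ⟨fun a b => map_add _ a b, fun r a => _root_.map_smul _ r a⟩ (c j)
        have h2 : Convex ℝ {x : Euc n | g x ≤ e₀} := convex_halfSpace_le
          ⟨fun a b => map_add _ a b, fun r a => _root_.map_smul _ r a⟩ e₀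
        exact h1.inter h2
    · rintro x ⟨hx1, hx2⟩
      set s : Fin n → ℝ := fun j => c j - f j x with hsdef
      have hs0 : ∀ j, 0 ≤ s j := fun j => sub_nonneg.mpr (hx1 j)
      have hsum : ∑ j, s j = g x - g p := by
        rw [hgp, hgapp, hsdef]
        rw [Finset.sum_sub_distrib]
        ring
      have hsumle : ∑ j, s j ≤ t := by
        rw [hsum, htdef]
        have := hx2
        linarith
      set W : Fin (n + 1) → ℝ :=
        fun k => if h : (k : ℕ) < n then s ⟨k, h⟩ / t else 1 - (∑ j, s j) / t with hWdef
      have hW0 : ∀ k, 0 ≤ W k := by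
        intro k
        simp only [hWdef]
        split_ifs with h
        · exact div_nonneg (hs0 _) ht.le
        · rw [sub_nonneg, div_le_one ht]
          exact hsumle
      have hWcast : ∀ k : Fin n, W k.castSucc = s k / t := by
        intro k
        rw [hWdef]
        simp only [Fin.coe_castSucc, k.isLt, dif_pos, Fin.eta]
      have hWlast : W (Fin.last n) = 1 - (∑ j, s j) / t := by
        rw [hWdef]; simp
      have hWsum : ∑ k, W k = 1 := by
        rw [Fin.sum_univ_castSucc]
        rw [Finset.sum_congr rfl fun k _ => hWcast k, hWlast]
        rw [← Finset.sum_div]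
        ring
      have hxcomb : ∑ k, W k • u k = x := by
        rw [Fin.sum_univ_castSucc]
        rw [Finset.sum_congr rfl fun k _ => by rw [hWcast, hucast], hWlast, hulast]
        have hterm : ∀ k : Fin n, (s k / t) • (p + t • B k) = (s k / t) • p + s k • B k := by
          intro k
          rw [smul_add, smul_smul, div_mul_cancel₀ _ ht.ne']
        rw [Finset.sum_congr rfl fun k _ => hterm k]
        rw [Finset.sum_add_distrib, ← Finset.sum_smul, ← Finset.sum_div]
        have hx' := hrep x
        have : x = p + ∑ j, s j • B j := by rw [hsdef]; exact hx'
        rw [this]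
        set a : ℝ := (∑ j, s j) / t
        have : a • p + ∑ j, s j • B j + (1 - a) • p = p + ∑ j, s j • B j := by
          rw [sub_smul, one_smul]
          abel
        rw [this]
      rw [← hxcomb, hTdef]
      rw [← Finset.centerMass_eq_of_sum_1 Finset.univ u hWsum]
      exact Finset.centerMass_mem_convexHull Finset.univ (fun k _ => hW0 k)
        (by rw [hWsum]; norm_num) (fun k _ => ⟨k, rfl⟩)
  have hPT : P ⊆ T := by
    intro x hx
    rw [hTchar]
    exact ⟨fun j => hfle j x hx, hge x hx⟩
  have hTle : ∀ x ∈ T, ∀ j, f j x ≤ c j := by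
    intro x hx
    rw [hTchar] at hx
    exact hx.1
  -- the flag of T
  set idx : Fin n → Finset (Fin n) := fun i => Finset.univ.filter (fun j => i ≤ j)
    with hidxdef
  set hfun : Fin n → (Euc n →L[ℝ] ℝ) := fun i => ∑ j ∈ idx i, f j with hhdef
  set eh : Fin n → ℝ := fun i => ∑ j ∈ idx i, c j with hehdef
  set G : Fin n → Set (Euc n) := fun i => {x ∈ T | hfun i x = eh i} with hGdef
  have hidxmem : ∀ i j : Fin n, j ∈ idx i ↔ i ≤ j := by
    intro i j; simp [hidxdef]
  have hhapp : ∀ i x, hfun i x = ∑ j ∈ idx i, f j x := by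
    intro i x
    simp [hhdef, ContinuousLinearMap.sum_apply]
  have hGchar : ∀ (i : Fin n) x, x ∈ G i ↔ x ∈ T ∧ ∀ j, i ≤ j → f j x = c j := by
    intro i x
    simp only [hGdef, mem_setOf_eq]
    constructor
    · rintro ⟨hxT, hx⟩
      refine ⟨hxT, fun j hj => ?_⟩
      rw [hhapp] at hx
      simp only [hehdef] at hx
      exact (Finset.sum_eq_sum_iff_of_le fun j _ => hTle x hxT j).mp hx j
        ((hidxmem i j).mpr hj)
    · rintro ⟨hxT, hx⟩
      refine ⟨hxT, ?_⟩
      rw [hhapp]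
      simp only [hehdef]
      exact Finset.sum_congr rfl fun j hj => hx j ((hidxmem i j).mp hj)
  have hpG : ∀ i, p ∈ G i := fun i => (hGchar i p).mpr ⟨hpT, fun j _ => hfp j⟩
  have huG : ∀ i k : Fin n, k < i → p + t • B k ∈ G i := by
    intro i k hk
    refine (hGchar _ _).mpr ⟨?_, fun j hj => ?_⟩
    · rw [← hucast, hTdef]
      exact subset_convexHull ℝ _ ⟨k.castSucc, rfl⟩
    · rw [hfu]
      have hjk : j ≠ k := fun hc => absurd (hc ▸ hj) (not_le.mpr hk)
      rw [if_neg hjk]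
      ring
  -- dimension of the faces of T
  have hMrank : ∀ i : Fin n,
      Module.finrank ℝ (Submodule.span ℝ (B '' {k : Fin n | k < i})) = i := by
    intro i
    have himg : B '' {k : Fin n | k < i} =
        Set.range (fun k : {k : Fin n // k < i} => B k.1) := by
      exact Set.image_eq_range _ _
    have hli : LinearIndependent ℝ (fun k : {k : Fin n // k < i} => B k.1) :=
      B.linearIndependent.comp Subtype.val Subtype.val_injective
    rw [himg, finrank_span_eq_card hli]
    have : Fintype.card {k : Fin n // k < i} = Fintype.card (Fin (i : ℕ)) := by
      refine Fintype.card_congr ⟨fun k => ⟨(k.1 : ℕ), k.2⟩,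
        fun m => ⟨⟨(m : ℕ), lt_trans m.2 i.isLt⟩, by
          rw [Fin.lt_def]; exact m.2⟩, fun k => by ext; rfl, fun m => by ext; rfl⟩
    rw [this, Fintype.card_fin]
  have hvsG : ∀ i : Fin n, vectorSpan ℝ (G i) =
      Submodule.span ℝ (B '' {k : Fin n | k < i}) := by
    intro i
    have hGsub : ∀ x ∈ G i, x - p ∈ Submodule.span ℝ (B '' {k : Fin n | k < i}) := by
      intro x hx
      obtain ⟨hxT, hx2⟩ := (hGchar i x).mp hx
      have hxp : x - p = ∑ j : Fin n, (c j - f j x) • B j := by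
        conv_lhs => rw [hrep x]
        rw [add_sub_cancel_left]
      rw [hxp]
      refine Submodule.sum_mem _ fun j _ => ?_
      by_cases hj : i ≤ j
      · rw [hx2 j hj, sub_self, zero_smul]
        exact Submodule.zero_mem _
      · exact Submodule.smul_mem _ _ (Submodule.subset_span ⟨j, not_le.mp hj, rfl⟩)
    apply le_antisymm
    · rw [vectorSpan_def, Submodule.span_le]
      rintro v ⟨a, ha, b, hb, rfl⟩
      have hab : a - b ∈ Submodule.span ℝ (⇑B '' {k : Fin n | k < i}) := by
        have h3 : a - b = (a - p) - (b - p) := by abel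
        rw [h3]
        exact Submodule.sub_mem _ (hGsub a ha) (hGsub b hb)
      simpa [vsub_eq_sub] using hab
    · rw [Submodule.span_le]
      rintro v ⟨k, hk, rfl⟩
      have h1 : (p + t • B k) -ᵥ p ∈ vectorSpan ℝ (G i) :=
        vsub_mem_vectorSpan ℝ (huG i k hk) (hpG i)
      have h2 : B k = t⁻¹ • ((p + t • B k) -ᵥ p) := by
        rw [vsub_eq_sub, add_sub_cancel_left, smul_smul, inv_mul_cancel₀ ht.ne', one_smul]
      rw [SetLike.mem_coe, h2]
      exact Submodule.smul_mem _ _ h1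
  have hGrank : ∀ i : Fin n, Module.finrank ℝ (vectorSpan ℝ (G i)) = i := by
    intro i; rw [hvsG i, hMrank i]
  -- the faces of T
  have hface : ∀ i : Fin n, IsFaceOfDim T (i : ℕ) (G i) := by
    intro i
    refine ⟨⟨hfun i, eh i, ?_, ?_, ⟨p, hpT, ?_⟩, ?_⟩, hGrank i⟩
    · intro hc
      have h1 : hfun i (B i) = -1 := by
        rw [hhapp]
        rw [Finset.sum_congr rfl fun j _ => hfB j i]
        rw [Finset.sum_ite_eq' (idx i) i (fun _ => (-1 : ℝ))]
        rw [if_pos ((hidxmem i i).mpr le_rfl)]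
      rw [hc] at h1
      simp at h1
    · intro x hx
      rw [hhapp]
      simp only [hehdef]
      exact Finset.sum_le_sum fun j _ => hTle x hx j
    · rw [hhapp]
      simp only [hehdef]
      exact Finset.sum_congr rfl fun j _ => hfp j
    · rfl
  have hGmono : ∀ i j : Fin n, i ≤ j → G i ⊆ G j := by
    intro i j hij x hx
    obtain ⟨hxT, hx2⟩ := (hGchar i x).mp hx
    exact (hGchar j x).mpr ⟨hxT, fun k hk => hx2 k (le_trans hij hk)⟩
  -- link between the flags of P and of T
  have hFG : ∀ i, F i ⊆ G i := by
    intro i x hx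
    exact (hGchar i x).mpr ⟨hPT (hFsubP i hx), fun j hj => hfc j x (hFmono i j hj hx)⟩
  have hspanFG : ∀ i, affineSpan ℝ (F i) = affineSpan ℝ (G i) := by
    intro i
    have hdir : (affineSpan ℝ (F i)).direction = (affineSpan ℝ (G i)).direction := by
      rw [direction_affineSpan, direction_affineSpan]
      refine (Submodule.eq_of_le_of_finrank_le (vectorSpan_mono ℝ (hFG i)) ?_).symm.symm
      rw [hFrank i, hGrank i]
    obtain ⟨x₀, hx₀⟩ := hFne i
    exact AffineSubspace.ext_of_direction_eq hdir
      ⟨x₀, subset_affineSpan ℝ _ hx₀, subset_affineSpan ℝ _ (hFG i hx₀)⟩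
  -- assemble
  refine ⟨T, ⟨u, hindep, hTdef⟩, hPT, G, ⟨hface, hGmono⟩, vS, hvindep, hSeq,
    fun i => ?_, interior_mono hPT hvlast⟩
  exact intrinsicInterior_subset_of_affineSpan_eq (hFG i) (hspanFG i) (hvmem i)

/-- **Lemma.** If `S` is a flag simplex of an `n`-polytope `P ⊆ ℝⁿ`, then there exists an
`n`-simplex `T ⊇ P` such that `S` is also a flag simplex of `T`. -/
theorem flag_simplex_of_circumscribed_simplex (n : ℕ) (P : Set (Euc n)) (hP : IsPolytope P)
    (S : Set (Euc n)) (hS : IsFlagSimplex n P S) :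
    ∃ T : Set (Euc n), IsSimplex n T ∧ P ⊆ T ∧ IsFlagSimplex n T S := by
  rcases Nat.eq_zero_or_pos n with hn | hn
  · subst hn
    obtain ⟨F0, hF0, vS, hvindep, hSeq, hvmem, hvlast⟩ := hS
    have hSuniv : S = Set.univ := by
      apply Set.eq_univ_of_forall
      intro x
      have hx : x = vS (Fin.last 0) := Subsingleton.elim _ _
      rw [hx, hSeq]
      exact subset_convexHull ℝ _ ⟨Fin.last 0, rfl⟩
    refine ⟨S, ⟨vS, hvindep, hSeq⟩, by rw [hSuniv]; exact Set.subset_univ _,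
      Fin.elim0, ⟨fun i => Fin.elim0 i, fun i => Fin.elim0 i⟩,
      vS, hvindep, hSeq, fun i => Fin.elim0 i, ?_⟩
    rw [hSuniv, interior_univ]
    exact Set.mem_univ _
  · exact aux_pos n hn P hP S hS
end
end
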